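/- arXiv:2311.07308 — 3 statements merged into one kernel-verified Lean document; each statement's English description precedes it below -/
import Mathlib

section
/- Let r ≥ 1 and n ≥ r+1, and let I_r(K_n) be the ideal of K[x_1,…,x_n] generated by all squarefree monomials of degree r+1. Then the graded Betti numbers of R/I_r(K_n) satisfy β_{i, i+r}(R/I_r(K_n)) = C(i+r-1, r) · C(n, i+r) for 1 ≤ i ≤ n−r, and β_{i, i+d}(R/I_r(K_n)) = 0 for all d ≠ r with (i,d) ≠ (0,0). -/
open Finset

/-- An (abstract) simplicial complex on vertex type `V`: a downward-closed collection of
finite subsets of `V`. -/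
structure SC (V : Type*) where
  faces : Set (Finset V)
  down : ∀ ⦃F G : Finset V⦄, F ∈ faces → G ⊆ F → G ∈ faces

variable {V : Type*} [LinearOrder V] (K : Type*) [Field K]

/-- The faces of `Δ` of cardinality `k` (the `(k-1)`-dimensional faces). -/
def SC.face (Δ : SC V) (k : ℕ) : Type _ := {F : Finset V // F ∈ Δ.faces ∧ F.card = k}

/-- The `k`-th term of the reduced simplicial chain complex of `Δ` over `K`: the free
`K`-vector space on the faces of cardinality `k` (so degree `k` corresponds to simplicial
dimension `k - 1`; degree `0` is spanned by the empty face). -/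
abbrev SC.chain (Δ : SC V) (k : ℕ) : Type _ := Δ.face k →₀ K

/-- The simplicial boundary map `C_{k+1} → C_k`, with the usual alternating signs
determined by the linear order on the vertices. -/
noncomputable def SC.bdry (Δ : SC V) (k : ℕ) : Δ.chain K (k + 1) →ₗ[K] Δ.chain K k :=
  Finsupp.lsum K fun F => LinearMap.toSpanSingleton K _
    (∑ x ∈ F.1.attach,
      ((-1 : K) ^ ((F.1.filter (fun y => y < x.1)).card)) •
        Finsupp.single
          (⟨F.1.erase x.1, Δ.down F.2.1 (Finset.erase_subset _ _), by
              simp [Finset.card_erase_of_mem x.2, F.2.2]⟩ : Δ.face k)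
          (1 : K))

/-- The boundary map out of degree `k` (the zero map in degree `0`). -/
noncomputable def SC.bdryTo (Δ : SC V) : (k : ℕ) → (Δ.chain K k →ₗ[K] Δ.chain K (k - 1))
  | 0 => 0
  | (k + 1) => Δ.bdry K k

/-- The dimension over `K` of the degree-`k` reduced simplicial homology of `Δ`
(i.e. the reduced homology in simplicial dimension `k - 1`): since the image of the
boundary is contained in its kernel, this is `dim ker ∂_k − dim im ∂_{k+1}`. -/
noncomputable def SC.hdim (Δ : SC V) (k : ℕ) : ℕ :=
  Module.finrank K (LinearMap.ker (Δ.bdryTo K k)) -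
    Module.finrank K (LinearMap.range (Δ.bdry K k))

/-- The induced subcomplex `Δ[W]` of `Δ` on a subset `W` of the vertices. -/
def SC.induce (Δ : SC V) (W : Finset V) : SC V :=
  ⟨{F | F ∈ Δ.faces ∧ F ⊆ W}, fun F G hF hGF => ⟨Δ.down hF.1 hGF, hGF.trans hF.2⟩⟩

/-- The graded Betti numbers `β_{i,j}` of the Stanley–Reisner ring of `Δ` over `K`,
via Hochster's formula: `β_{i,j} = ∑_{W ⊆ V, |W| = j} dim_K H̃_{j-i-1}(Δ[W]; K)`. -/
noncomputable def SC.betti [Fintype V] (Δ : SC V) (i j : ℕ) : ℕ :=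
  ∑ W ∈ Finset.univ.powersetCard j, (Δ.induce W).hdim K (j - i)

/-- The Castelnuovo–Mumford regularity of the Stanley–Reisner ring of `Δ` over `K`:
`reg = max { d : β_{i,i+d} ≠ 0 for some i }`. -/
noncomputable def SC.reg [Fintype V] (Δ : SC V) : ℕ :=
  sSup {d : ℕ | ∃ i : ℕ, Δ.betti K i (i + d) ≠ 0}

/-- The Stanley–Reisner complex of the ideal `I_r(K_n)` generated by all squarefree
monomials of degree `r+1`: all subsets of the `n` vertices of cardinality at most `r`. -/
def skel (V : Type*) [LinearOrder V] (s : ℕ) : SC V :=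
  ⟨{F | F.card ≤ s}, fun _ _ hF h => (Finset.card_le_card h).trans hF⟩

namespace BettiAux
set_option linter.unusedSectionVars false

open scoped Classical in
noncomputable def eface (Δ : SC V) (k : ℕ) (s : Finset V) : Δ.chain K k :=
  if h : s ∈ Δ.faces ∧ s.card = k then Finsupp.single (⟨s, h⟩ : Δ.face k) 1 else 0

lemma eface_of_mem (Δ : SC V) {k : ℕ} {s : Finset V} (h1 : s ∈ Δ.faces) (h2 : s.card = k) :
    eface K Δ k s = Finsupp.single (⟨s, h1, h2⟩ : Δ.face k) 1 := by
  rw [eface, dif_pos ⟨h1, h2⟩]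
  rfl

lemma bdry_single (Δ : SC V) (k : ℕ) (F : Δ.face (k + 1)) :
    Δ.bdry K k (Finsupp.single F 1) =
      ∑ x ∈ F.1, ((-1 : K) ^ ((F.1.filter (fun y => y < x)).card)) •
        eface K Δ k (F.1.erase x) := by
  rw [SC.bdry, Finsupp.lsum_single, LinearMap.toSpanSingleton_apply, one_smul,
    ← Finset.sum_attach F.1 (fun x => ((-1 : K) ^ ((F.1.filter (fun y => y < x)).card)) •
        eface K Δ k (F.1.erase x))]
  refine Finset.sum_congr rfl fun x _ => ?_
  rw [eface_of_mem K Δ (Δ.down F.2.1 (Finset.erase_subset _ _))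
    (by simp [Finset.card_erase_of_mem x.2, F.2.2])]
  rfl


lemma bdry_eface (Δ : SC V) (k : ℕ) {s : Finset V} (h1 : s ∈ Δ.faces) (h2 : s.card = k + 1) :
    Δ.bdry K k (eface K Δ (k + 1) s) =
      ∑ x ∈ s, ((-1 : K) ^ ((s.filter (fun y => y < x)).card)) • eface K Δ k (s.erase x) := by
  erw [eface_of_mem K Δ h1 h2, bdry_single]

omit K in
lemma filter_lt_erase_of_lt (s : Finset V) {x y : V} (hxy : y < x) :
    ((s.erase x).filter (fun z => z < y)).card = (s.filter (fun z => z < y)).card := by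
  rw [Finset.filter_erase, Finset.erase_eq_of_notMem]
  simp only [Finset.mem_filter, not_and]
  exact fun _ h => absurd h (not_lt.2 hxy.le)

omit K in
lemma filter_lt_erase_of_gt (s : Finset V) {x y : V} (hy : y ∈ s) (hxy : y < x) :
    ((s.erase y).filter (fun z => z < x)).card = (s.filter (fun z => z < x)).card - 1 := by
  rw [Finset.filter_erase, Finset.card_erase_of_mem (by simpa using ⟨hy, hxy⟩)]

lemma neg_one_pow_pred {m : ℕ} (hm : 0 < m) : ((-1 : K)) ^ m = -((-1 : K) ^ (m - 1)) := by
  conv_lhs => rw [show m = (m - 1) + 1 by omega]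
  rw [pow_succ]; ring

lemma sgn_cancel {s : Finset V} {x y : V} (hx : x ∈ s) (hy : y ∈ s) (hxy : x ≠ y) :
    ((-1 : K) ^ ((s.filter (fun z => z < x)).card) *
      (-1 : K) ^ (((s.erase x).filter (fun z => z < y)).card)) =
    -((-1 : K) ^ ((s.filter (fun z => z < y)).card) *
      (-1 : K) ^ (((s.erase y).filter (fun z => z < x)).card)) := by
  rcases hxy.lt_or_gt with h | h
  · -- x < y
    rw [filter_lt_erase_of_gt s hx h, filter_lt_erase_of_lt s h,
      neg_one_pow_pred K (Finset.card_pos.2 ⟨x, by simpa using ⟨hx, h⟩⟩ :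
        0 < (s.filter (fun z => z < y)).card)]
    ring
  · -- y < x
    rw [filter_lt_erase_of_lt s h, filter_lt_erase_of_gt s hy h,
      neg_one_pow_pred K (Finset.card_pos.2 ⟨y, by simpa using ⟨hy, h⟩⟩ :
        0 < (s.filter (fun z => z < x)).card)]
    ring

omit K in
lemma erase_erase_comm (s : Finset V) (x y : V) :
    (s.erase x).erase y = (s.erase y).erase x := by
  ext z; simp only [Finset.mem_erase]; tauto

lemma bdry_bdry (Δ : SC V) (k : ℕ) :
    (Δ.bdry K k).comp (Δ.bdry K (k + 1)) = 0 := by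
  apply Finsupp.lhom_ext
  intro F c
  have hc : (Finsupp.single F c : Δ.chain K (k+2)) = c • Finsupp.single F 1 := by
    rw [Finsupp.smul_single, smul_eq_mul, mul_one]
  rw [hc, map_smul, map_smul, LinearMap.comp_apply, bdry_single, map_sum]
  refine congrArg (fun z => c • z) ?_
  have hF1 : ∀ x ∈ F.1, Δ.bdry K k
      (((-1 : K) ^ ((F.1.filter (fun y => y < x)).card)) • eface K Δ (k+1) (F.1.erase x)) =
      ∑ y ∈ F.1.erase x, (((-1 : K) ^ ((F.1.filter (fun y => y < x)).card)) *
        (-1 : K) ^ (((F.1.erase x).filter (fun z => z < y)).card)) •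
          eface K Δ k ((F.1.erase x).erase y) := by
    intro x hx
    rw [map_smul, bdry_eface K Δ k (Δ.down F.2.1 (Finset.erase_subset _ _))
      (by simp [Finset.card_erase_of_mem hx, F.2.2]), Finset.smul_sum]
    exact Finset.sum_congr rfl fun y _ => by rw [smul_smul]
  rw [Finset.sum_congr rfl hF1, Finset.sum_sigma' F.1 (fun x => F.1.erase x)]
  refine Finset.sum_involution (fun p _ => ⟨p.2, p.1⟩) ?_ ?_ ?_ ?_ |>.trans ?_
  · rintro ⟨x, y⟩ hp
    simp only [Finset.mem_sigma, Finset.mem_erase] at hp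
    obtain ⟨hx, hyx, hy⟩ := hp
    rw [sgn_cancel K hx hy (Ne.symm hyx), erase_erase_comm F.1 y x]
    rw [neg_smul, neg_add_cancel]
  · rintro ⟨x, y⟩ hp _
    intro h
    simp only [Finset.mem_sigma, Finset.mem_erase] at hp
    exact hp.2.1 (congrArg Sigma.fst h)
  · rintro ⟨x, y⟩ hp
    simp only [Finset.mem_sigma, Finset.mem_erase] at hp ⊢
    exact ⟨hp.2.2, Ne.symm hp.2.1, hp.1⟩
  · rintro ⟨x, y⟩ hp
    rfl
  · simp
variable [Fintype V]

omit [LinearOrder V] in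
instance SCface_finite (Δ : SC V) (k : ℕ) : Finite (Δ.face k) :=
  Subtype.finite

def SK (r : ℕ) (W : Finset V) : SC V := (skel V r).induce W

omit [Fintype V] K in
lemma mem_SK {r : ℕ} {W : Finset V} {F : Finset V} :
    F ∈ (SK r W).faces ↔ F.card ≤ r ∧ F ⊆ W := Iff.rfl

def faceEquiv (r : ℕ) (W : Finset V) (k : ℕ) (hk : k ≤ r) :
    (SK r W).face k ≃ {x // x ∈ W.powersetCard k} where
  toFun F := ⟨F.1, Finset.mem_powersetCard.2 ⟨(mem_SK.1 F.2.1).2, F.2.2⟩⟩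
  invFun s := ⟨s.1, mem_SK.2 ⟨by rw [(Finset.mem_powersetCard.1 s.2).2]; exact hk,
    (Finset.mem_powersetCard.1 s.2).1⟩, (Finset.mem_powersetCard.1 s.2).2⟩
  left_inv F := Subtype.ext rfl
  right_inv s := Subtype.ext rfl

omit [Fintype V] K in
lemma face_isEmpty_of_gt {r : ℕ} {W : Finset V} {k : ℕ} (hk : r < k) :
    IsEmpty ((SK r W).face k) :=
  ⟨fun F => absurd (F.2.2 ▸ (mem_SK.1 F.2.1).1) (not_le.2 hk)⟩

omit [Fintype V] K in
lemma face_isEmpty_of_empty {r k : ℕ} (hk : 1 ≤ k) :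
    IsEmpty ((SK r (∅ : Finset V)).face k) :=
  ⟨fun F => by
    have h1 : F.1 = ∅ := Finset.subset_empty.1 (mem_SK.1 F.2.1).2
    have := F.2.2
    rw [h1] at this
    simp at this
    omega⟩

omit [LinearOrder V] in
lemma finrank_chain (Δ : SC V) (k : ℕ) :
    Module.finrank K (Δ.chain K k) = Nat.card (Δ.face k) := by
  letI := Fintype.ofFinite (Δ.face k)
  rw [Module.finrank_finsupp_self, Nat.card_eq_fintype_card]

omit K in
lemma card_face (r : ℕ) (W : Finset V) (k : ℕ) (hk : k ≤ r) :
    Nat.card ((SK r W).face k) = W.card.choose k := by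
  rw [Nat.card_congr (faceEquiv r W k hk), Nat.card_eq_finsetCard,
    Finset.card_powersetCard]

lemma finrank_chain_SK (r : ℕ) (W : Finset V) (k : ℕ) (hk : k ≤ r) :
    Module.finrank K ((SK r W).chain K k) = W.card.choose k := by
  rw [finrank_chain, card_face r W k hk]
omit [Fintype V] K in
lemma SK_face_subset {r : ℕ} {W : Finset V} {m : ℕ} (G : (SK r W).face m) : G.1 ⊆ W :=
  (mem_SK.1 G.2.1).2

omit [Fintype V] K in
lemma SK_face_card_le {r : ℕ} {W : Finset V} {m : ℕ} (G : (SK r W).face m) : G.1.card ≤ r :=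
  (mem_SK.1 G.2.1).1

def embFace {r : ℕ} {W W' : Finset V} (h : W' ⊆ W) {m : ℕ} (G : (SK r W').face m) :
    (SK r W).face m :=
  ⟨G.1, mem_SK.2 ⟨SK_face_card_le G, (SK_face_subset G).trans h⟩, G.2.2⟩

omit [Fintype V] K in
lemma embFace_injective {r : ℕ} {W W' : Finset V} (h : W' ⊆ W) {m : ℕ} :
    Function.Injective (embFace (r := r) h (m := m)) :=
  fun a b hab => Subtype.ext (congrArg Subtype.val hab : (embFace h a).1 = (embFace h b).1)

omit [Fintype V] K in
lemma not_mem_of_subset_erase {W : Finset V} {v : V} {s : Finset V} (h : s ⊆ W.erase v) :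
    v ∉ s := fun hv => (Finset.mem_erase.1 (h hv)).1 rfl

def joinFace {r : ℕ} {W : Finset V} {v : V} (hv : v ∈ W) {m : ℕ} (hm : m + 1 ≤ r)
    (G : (SK r (W.erase v)).face m) : (SK r W).face (m + 1) :=
  ⟨insert v G.1,
    mem_SK.2 ⟨by
      rw [Finset.card_insert_of_notMem (not_mem_of_subset_erase (SK_face_subset G)), G.2.2]
      exact hm,
      Finset.insert_subset hv ((SK_face_subset G).trans (Finset.erase_subset _ _))⟩,
    by rw [Finset.card_insert_of_notMem (not_mem_of_subset_erase (SK_face_subset G)), G.2.2]⟩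

noncomputable def Emb (r : ℕ) {W W' : Finset V} (h : W' ⊆ W) (m : ℕ) :
    (SK r W').chain K m →ₗ[K] (SK r W).chain K m :=
  Finsupp.lmapDomain K K (embFace h)

noncomputable def Joinv (r : ℕ) {W : Finset V} {v : V} (hv : v ∈ W) (m : ℕ) (hm : m + 1 ≤ r) :
    (SK r (W.erase v)).chain K m →ₗ[K] (SK r W).chain K (m + 1) :=
  Finsupp.lmapDomain K K (joinFace hv hm)

lemma Emb_eface (r : ℕ) {W W' : Finset V} (h : W' ⊆ W) (m : ℕ) {s : Finset V}
    (h1 : s ∈ (SK r W').faces) (h2 : s.card = m) :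
    Emb K r h m (eface K (SK r W') m s) = eface K (SK r W) m s := by
  erw [eface_of_mem K _ h1 h2, Emb, Finsupp.lmapDomain_apply, Finsupp.mapDomain_single,
    eface_of_mem K _ (mem_SK.2 ⟨(mem_SK.1 h1).1, (mem_SK.1 h1).2.trans h⟩) h2]
  rfl

lemma Joinv_eface (r : ℕ) {W : Finset V} {v : V} (hv : v ∈ W) (m : ℕ) (hm : m + 1 ≤ r)
    {s : Finset V} (h1 : s ∈ (SK r (W.erase v)).faces) (h2 : s.card = m) :
    Joinv K r hv m hm (eface K (SK r (W.erase v)) m s) =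
      eface K (SK r W) (m + 1) (insert v s) := by
  erw [eface_of_mem K _ h1 h2, Joinv, Finsupp.lmapDomain_apply, Finsupp.mapDomain_single]
  have hvs : v ∉ s := not_mem_of_subset_erase (mem_SK.1 h1).2
  rw [eface_of_mem K _ (mem_SK.2 ⟨by rw [Finset.card_insert_of_notMem hvs, h2]; exact hm,
    Finset.insert_subset hv ((mem_SK.1 h1).2.trans (Finset.erase_subset _ _))⟩)
    (by rw [Finset.card_insert_of_notMem hvs, h2])]
  rfl

omit [Fintype V] K in
lemma erase_mem_SK {r : ℕ} {W : Finset V} {m : ℕ} (G : (SK r W).face m) (x : V) :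
    G.1.erase x ∈ (SK r W).faces :=
  mem_SK.2 ⟨(Finset.card_le_card (Finset.erase_subset _ _)).trans (SK_face_card_le G),
    (Finset.erase_subset _ _).trans (SK_face_subset G)⟩

lemma bdry_Emb (r : ℕ) {W W' : Finset V} (hsub : W' ⊆ W) (m : ℕ) :
    ((SK r W).bdry K m).comp (Emb K r hsub (m + 1)) =
      (Emb K r hsub m).comp ((SK r W').bdry K m) := by
  apply Finsupp.lhom_ext
  intro G c
  rw [LinearMap.comp_apply, LinearMap.comp_apply, ← Finsupp.smul_single_one,
    map_smul, map_smul, map_smul, map_smul]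
  congr 1
  have hG : (Emb K r hsub (m+1)) (Finsupp.single G 1) =
      Finsupp.single (embFace hsub G) 1 := by
    rw [Emb, Finsupp.lmapDomain_apply, Finsupp.mapDomain_single]
  rw [hG, bdry_single, bdry_single, map_sum]
  refine Finset.sum_congr rfl fun x hx => ?_
  rw [map_smul]
  have h1 : G.1.erase x ∈ (SK r W').faces := erase_mem_SK G x
  have h2 : (G.1.erase x).card = m := by
    simp [Finset.card_erase_of_mem hx, G.2.2]
  rw [Emb_eface K r hsub m h1 h2]
  rfl

omit [Fintype V] K in
lemma lt_of_mem_subset_erase_min {W : Finset V} (hW : W.Nonempty) {s : Finset V}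
    (h : s ⊆ W.erase (W.min' hW)) {x : V} (hx : x ∈ s) : W.min' hW < x := by
  have := Finset.mem_erase.1 (h hx)
  exact lt_of_le_of_ne (W.min'_le x this.2) (Ne.symm this.1)

lemma Emb_single (r : ℕ) {W W' : Finset V} (hsub : W' ⊆ W) (m : ℕ)
    (G : (SK r W').face m) (c : K) :
    Emb K r hsub m (Finsupp.single G c) = Finsupp.single (embFace hsub G) c := by
  rw [Emb, Finsupp.lmapDomain_apply, Finsupp.mapDomain_single]

lemma bdry_Joinv (r : ℕ) {W : Finset V} (hW : W.Nonempty) (k : ℕ) (hk : k + 2 ≤ r) :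
    ((SK r W).bdry K (k + 1)).comp
        (Joinv K r (W.min'_mem hW) (k + 1) hk) =
      (Emb K r (Finset.erase_subset _ _) (k + 1)) -
        (Joinv K r (W.min'_mem hW) k (by omega)).comp
          ((SK r (W.erase (W.min' hW))).bdry K k) := by
  set v := W.min' hW with hv
  apply Finsupp.lhom_ext
  intro G c
  rw [LinearMap.comp_apply, LinearMap.sub_apply, LinearMap.comp_apply,
    ← Finsupp.smul_single_one, map_smul, map_smul, map_smul, map_smul, map_smul, ← smul_sub]
  congr 1
  have hvG : v ∉ G.1 := not_mem_of_subset_erase (SK_face_subset G)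
  have hlt : ∀ x ∈ G.1, v < x := fun x hx =>
    lt_of_mem_subset_erase_min hW (SK_face_subset G) hx
  have hJ : (Joinv K r (W.min'_mem hW) (k+1) hk) (Finsupp.single G 1) =
      Finsupp.single (joinFace (W.min'_mem hW) hk G) 1 := by
    rw [Joinv, Finsupp.lmapDomain_apply, Finsupp.mapDomain_single]
  rw [hJ, bdry_single, bdry_single, Emb_single]
  have htop : (joinFace (W.min'_mem hW) hk G).1 = insert v G.1 := rfl
  rw [htop, Finset.sum_insert hvG]
  -- the v-term
  have hfilv : ((insert v G.1).filter (fun y => y < v)).card = 0 := by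
    rw [Finset.card_eq_zero, Finset.filter_eq_empty_iff]
    intro z hz
    rcases Finset.mem_insert.1 hz with h | h
    · simp [h]
    · exact not_lt.2 (hlt z h).le
  have herasev : (insert v G.1).erase v = G.1 := Finset.erase_insert hvG
  rw [hfilv, herasev, pow_zero, one_smul]
  have hsingle : eface K (SK r W) (k+1) G.1 =
      Finsupp.single (embFace (Finset.erase_subset v W) G) 1 := by
    rw [eface_of_mem K _ (mem_SK.2 ⟨SK_face_card_le G,
      (SK_face_subset G).trans (Finset.erase_subset _ _)⟩) G.2.2]
    rfl
  have hrest : ∀ x ∈ G.1,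
      ((-1 : K) ^ (((insert v G.1).filter (fun y => y < x)).card)) •
        eface K (SK r W) (k+1) ((insert v G.1).erase x) =
      -(((-1 : K) ^ ((G.1.filter (fun y => y < x)).card)) •
        (Joinv K r (W.min'_mem hW) k (by omega : k + 1 ≤ r))
          (eface K (SK r (W.erase v)) k (G.1.erase x))) := by
    intro x hx
    have hvx : v ≠ x := (hlt x hx).ne
    have h1 : (insert v G.1).filter (fun y => y < x) =
        insert v (G.1.filter (fun y => y < x)) := by
      ext z
      simp only [Finset.mem_filter, Finset.mem_insert]
      constructor
      · rintro ⟨h | h, hz⟩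
        · exact Or.inl h
        · exact Or.inr ⟨h, hz⟩
      · rintro (h | ⟨h, hz⟩)
        · exact ⟨Or.inl h, h ▸ hlt x hx⟩
        · exact ⟨Or.inr h, hz⟩
    have h2 : v ∉ G.1.filter (fun y => y < x) := fun h => hvG (Finset.mem_filter.1 h).1
    have h3 : G.1.erase x ∈ (SK r (W.erase v)).faces := erase_mem_SK G x
    have h4 : (G.1.erase x).card = k := by
      simp [Finset.card_erase_of_mem hx, G.2.2]
    rw [h1, Finset.card_insert_of_notMem h2, Finset.erase_insert_of_ne hvx,
      Joinv_eface K r (W.min'_mem hW) k (by omega) h3 h4, pow_succ, mul_neg_one,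
      neg_smul]
  rw [Finset.sum_congr rfl hrest, Finset.sum_neg_distrib, hsingle, map_sum]
  simp only [map_smul]
  abel
lemma lcomap_apply {α β : Type*} (f : α → β) (hf : Function.Injective f) (l : β →₀ K) (a : α) :
    Finsupp.lcomapDomain (R := K) f hf l a = l (f a) := rfl

lemma comap_Emb_single_join (r : ℕ) {W : Finset V} {v : V} (hv : v ∈ W) (m : ℕ)
    (hm : m + 1 ≤ r) (H : (SK r (W.erase v)).face m) (c : K) :
    Finsupp.lcomapDomain (R := K) (embFace (Finset.erase_subset v W) (m := m + 1))
      (embFace_injective _) (Finsupp.single (joinFace hv hm H) c) = 0 := by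
  refine Finsupp.ext fun a => ?_
  rw [lcomap_apply, Finsupp.coe_zero, Pi.zero_apply, Finsupp.single_eq_of_ne]
  intro h
  have hval : insert v H.1 = a.1 := (congrArg Subtype.val h).symm
  exact not_mem_of_subset_erase (SK_face_subset a) (hval ▸ Finset.mem_insert_self v H.1)

lemma comap_Emb_Emb (r : ℕ) {W W' : Finset V} (hsub : W' ⊆ W) (m : ℕ)
    (z : (SK r W').chain K m) :
    Finsupp.lcomapDomain (R := K) (embFace (r := r) hsub (m := m)) (embFace_injective _)
      (Emb K r hsub m z) = z := by
  refine Finsupp.ext fun a => ?_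
  rw [lcomap_apply, Emb, Finsupp.lmapDomain_apply,
    Finsupp.mapDomain_apply (embFace_injective hsub)]

lemma rank_bdry (r : ℕ) (hr : 1 ≤ r) {W : Finset V} (hW : W.Nonempty) (k : ℕ)
    (hk : k + 1 ≤ r) :
    Module.finrank K (LinearMap.range ((SK r W).bdry K k)) = (W.card - 1).choose k := by
  cases k with
  | zero =>
    rw [Nat.choose_zero_right]
    have hle : Module.finrank K (LinearMap.range ((SK r W).bdry K 0)) ≤ 1 := by
      have := Submodule.finrank_le (LinearMap.range ((SK r W).bdry K 0))
      rwa [finrank_chain_SK K r W 0 (Nat.zero_le r), Nat.choose_zero_right] at this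
    have hne : Module.finrank K (LinearMap.range ((SK r W).bdry K 0)) ≠ 0 := by
      intro h0
      obtain ⟨v, hv⟩ := hW
      have hF : ({v} : Finset V) ∈ (SK r W).faces :=
        mem_SK.2 ⟨by simpa using hr, Finset.singleton_subset_iff.2 hv⟩
      set F : (SK r W).face 1 := ⟨{v}, hF, Finset.card_singleton v⟩ with hFdef
      have hbd : (SK r W).bdry K 0 (Finsupp.single F 1) =
          eface K (SK r W) 0 (∅ : Finset V) := by
        rw [bdry_single]
        have h5 : (F.1 : Finset V) = {v} := rfl
        rw [h5, Finset.sum_singleton, Finset.erase_singleton, Finset.filter_singleton,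
          if_neg (lt_irrefl v), Finset.card_empty, pow_zero, one_smul]
      have hnz : eface K (SK r W) 0 (∅ : Finset V) ≠ 0 := by
        rw [eface_of_mem K _ (mem_SK.2 ⟨by simp, Finset.empty_subset W⟩) Finset.card_empty]
        exact fun h => one_ne_zero (Finsupp.single_eq_zero.1 h)
      have hsub : Subsingleton (LinearMap.range ((SK r W).bdry K 0)) :=
        Module.finrank_zero_iff.1 h0
      have hmem : eface K (SK r W) 0 (∅ : Finset V) ∈
          LinearMap.range ((SK r W).bdry K 0) := ⟨Finsupp.single F 1, hbd⟩
      have := Subsingleton.elim (⟨_, hmem⟩ : LinearMap.range ((SK r W).bdry K 0)) 0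
      exact hnz (by simpa using congrArg Subtype.val this)
    omega
  | succ k =>
    set v := W.min' hW with hvdef
    have hv : v ∈ W := W.min'_mem hW
    have hk' : k + 1 ≤ r := by omega
    set Jtop := Joinv K r hv (k + 1) hk with hJtop
    set f := ((SK r W).bdry K (k + 1)).comp Jtop with hfdef
    have hcone := bdry_Joinv K r hW k hk
    have hQJ : ∀ y, Finsupp.lcomapDomain (R := K)
        (embFace (Finset.erase_subset v W) (m := k + 1)) (embFace_injective _)
        (Joinv K r hv k hk' y) = 0 := by
      intro y
      induction y using Finsupp.induction_linear with
      | zero => simp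
      | add a b ha hb => rw [map_add, map_add, ha, hb, add_zero]
      | single H c =>
        rw [Joinv, Finsupp.lmapDomain_apply, Finsupp.mapDomain_single]
        exact comap_Emb_single_join K r hv k hk' H c
    have hQf : ∀ z, Finsupp.lcomapDomain (R := K)
        (embFace (Finset.erase_subset v W) (m := k + 1)) (embFace_injective _) (f z) = z := by
      intro z
      have h1 : f z = Emb K r (Finset.erase_subset v W) (k + 1) z -
          Joinv K r hv k hk' ((SK r (W.erase v)).bdry K k z) := by
        have := LinearMap.ext_iff.1 hcone z
        rwa [LinearMap.sub_apply, LinearMap.comp_apply, LinearMap.comp_apply] at this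
      rw [h1, map_sub, comap_Emb_Emb, hQJ, sub_zero]
    have hinj : Function.Injective f := Function.LeftInverse.injective hQf
    have hrange : LinearMap.range ((SK r W).bdry K (k + 1)) = LinearMap.range f := by
      refine le_antisymm ?_ (LinearMap.range_comp_le_range _ _)
      have key : ∀ F : (SK r W).face (k + 2),
          (SK r W).bdry K (k + 1) (Finsupp.single F 1) ∈ LinearMap.range f := by
        intro F
        by_cases hvF : v ∈ F.1
        · have hG1 : F.1.erase v ∈ (SK r (W.erase v)).faces :=
            mem_SK.2 ⟨(Finset.card_le_card (Finset.erase_subset _ _)).trans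
              (SK_face_card_le F), Finset.erase_subset_erase v (SK_face_subset F)⟩
          have hG2 : (F.1.erase v).card = k + 1 := by
            rw [Finset.card_erase_of_mem hvF, F.2.2]
            omega
          refine ⟨Finsupp.single (⟨F.1.erase v, hG1, hG2⟩ :
            (SK r (W.erase v)).face (k + 1)) 1, ?_⟩
          erw [hfdef, LinearMap.comp_apply, hJtop, Joinv, Finsupp.lmapDomain_apply,
            Finsupp.mapDomain_single]
          congr 1
          exact congrArg (fun z => Finsupp.single z (1 : K))
            (Subtype.ext (Finset.insert_erase hvF))
        · have hF'mem : F.1 ∈ (SK r (W.erase v)).faces :=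
            mem_SK.2 ⟨SK_face_card_le F,
              Finset.subset_erase.2 ⟨SK_face_subset F, hvF⟩⟩
          set F' : (SK r (W.erase v)).face (k + 2) := ⟨F.1, hF'mem, F.2.2⟩ with hF'
          refine ⟨(SK r (W.erase v)).bdry K (k + 1) (Finsupp.single F' 1), ?_⟩
          have h1 : f ((SK r (W.erase v)).bdry K (k + 1) (Finsupp.single F' 1)) =
              Emb K r (Finset.erase_subset v W) (k + 1)
                ((SK r (W.erase v)).bdry K (k + 1) (Finsupp.single F' 1)) -
              Joinv K r hv k hk' ((SK r (W.erase v)).bdry K k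
                ((SK r (W.erase v)).bdry K (k + 1) (Finsupp.single F' 1))) := by
            have := LinearMap.ext_iff.1 hcone
              ((SK r (W.erase v)).bdry K (k + 1) (Finsupp.single F' 1))
            rwa [LinearMap.sub_apply, LinearMap.comp_apply, LinearMap.comp_apply] at this
          have h2 : (SK r (W.erase v)).bdry K k
              ((SK r (W.erase v)).bdry K (k + 1) (Finsupp.single F' 1)) = 0 := by
            have := LinearMap.ext_iff.1 (bdry_bdry K (SK r (W.erase v)) k)
              (Finsupp.single F' 1)
            rwa [LinearMap.comp_apply] at this
          have h3 : Emb K r (Finset.erase_subset v W) (k + 2) (Finsupp.single F' 1) =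
              Finsupp.single F 1 := by
            rw [Emb, Finsupp.lmapDomain_apply, Finsupp.mapDomain_single]
            exact congrArg (fun z => Finsupp.single z (1 : K)) (Subtype.ext rfl)
          have h4 := LinearMap.ext_iff.1 (bdry_Emb K r (Finset.erase_subset v W) (k + 1))
            (Finsupp.single F' 1)
          rw [LinearMap.comp_apply, LinearMap.comp_apply, h3] at h4
          rw [h1, h2, map_zero, sub_zero, ← h4]
      rintro x ⟨z, rfl⟩
      induction z using Finsupp.induction_linear with
      | zero => rw [map_zero]; exact Submodule.zero_mem _
      | add a b ha hb => rw [map_add]; exact Submodule.add_mem _ ha hb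
      | single F c =>
        rw [← Finsupp.smul_single_one, map_smul]
        exact Submodule.smul_mem _ c (key F)
    rw [hrange, LinearMap.finrank_range_of_inj hinj,
      finrank_chain_SK K r (W.erase v) (k + 1) hk',
      Finset.card_erase_of_mem hv]
lemma finrank_ker_bdry (r : ℕ) (hr : 1 ≤ r) {W : Finset V} (hW : W.Nonempty) (k : ℕ)
    (hk : k + 1 ≤ r) :
    Module.finrank K (LinearMap.ker ((SK r W).bdry K k)) = (W.card - 1).choose (k + 1) := by
  have h1 := LinearMap.finrank_range_add_finrank_ker ((SK r W).bdry K k)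
  rw [rank_bdry K r hr hW k hk, finrank_chain_SK K r W (k + 1) hk] at h1
  have hcard : 1 ≤ W.card := Finset.card_pos.2 hW
  have hpas := Nat.choose_succ_succ (W.card - 1) k
  simp only [Nat.succ_eq_add_one] at hpas
  rw [show W.card - 1 + 1 = W.card by omega] at hpas
  omega

lemma finrank_chain_high (r : ℕ) (W : Finset V) (m : ℕ) (hm : r < m) :
    Module.finrank K ((SK r W).chain K m) = 0 := by
  rw [finrank_chain]
  haveI := face_isEmpty_of_gt (W := W) hm
  exact Nat.card_of_isEmpty

lemma hdim_SK (r : ℕ) (hr : 1 ≤ r) {W : Finset V} (hW : W.Nonempty) (m : ℕ) :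
    (SK r W).hdim K m = if m = r then (W.card - 1).choose r else 0 := by
  rcases lt_trichotomy m r with h | h | h
  · rw [if_neg h.ne, SC.hdim]
    cases m with
    | zero =>
      have hker : LinearMap.ker ((SK r W).bdryTo K 0) = ⊤ := LinearMap.ker_zero
      rw [hker, finrank_top, finrank_chain_SK K r W 0 (Nat.zero_le r),
        rank_bdry K r hr hW 0 (by omega)]
      simp
    | succ m =>
      have hker : (SK r W).bdryTo K (m + 1) = (SK r W).bdry K m := rfl
      rw [hker, finrank_ker_bdry K r hr hW m (by omega),
        rank_bdry K r hr hW (m + 1) (by omega)]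
      omega
  · subst h
    rw [if_pos rfl, SC.hdim]
    obtain ⟨s, rfl⟩ : ∃ s, s + 1 = m := ⟨m - 1, by omega⟩
    have hker : (SK (s + 1) W).bdryTo K (s + 1) = (SK (s + 1) W).bdry K s := rfl
    rw [hker, finrank_ker_bdry K (s + 1) hr hW s (le_refl (s + 1))]
    have h1 := LinearMap.finrank_range_add_finrank_ker ((SK (s + 1) W).bdry K (s + 1))
    have h2 : Module.finrank K ((SK (s + 1) W).chain K (s + 1 + 1)) = 0 :=
      finrank_chain_high K (s + 1) W (s + 1 + 1) (by omega)
    omega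
  · rw [if_neg h.ne', SC.hdim]
    have h0 : Module.finrank K ((SK r W).chain K m) = 0 := finrank_chain_high K r W m h
    have h2 := Submodule.finrank_le (LinearMap.ker ((SK r W).bdryTo K m))
    omega

lemma hdim_SK_empty (r m : ℕ) (hm : 1 ≤ m) :
    (SK r (∅ : Finset V)).hdim K m = 0 := by
  rw [SC.hdim]
  have h1 : Module.finrank K ((SK r (∅ : Finset V)).chain K m) = 0 := by
    rw [finrank_chain]
    haveI := face_isEmpty_of_empty (V := V) (r := r) hm
    exact Nat.card_of_isEmpty
  have h2 := Submodule.finrank_le (LinearMap.ker ((SK r (∅ : Finset V)).bdryTo K m))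
  omega
end BettiAux
/-- Graded Betti numbers of `R/I_r(K_n)`, where `I_r(K_n)` is generated by all squarefree
monomials of degree `r+1` in `n` variables: `β_{i,i+r} = C(i+r-1, r) · C(n, i+r)` for
`1 ≤ i ≤ n-r`, and `β_{i,i+d} = 0` for `d ≠ r` with `(i,d) ≠ (0,0)`. -/
theorem betti_complete (K : Type*) [Field K] (n r : ℕ) (hr : 1 ≤ r) (hn : r + 1 ≤ n) :
    (∀ i : ℕ, 1 ≤ i → i ≤ n - r →
      (skel (Fin n) r).betti K i (i + r) = (i + r - 1).choose r * n.choose (i + r)) ∧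
    (∀ i d : ℕ, d ≠ r → (i, d) ≠ (0, 0) →
      (skel (Fin n) r).betti K i (i + d) = 0) := by
  have hind : ∀ W : Finset (Fin n), (skel (Fin n) r).induce W = BettiAux.SK r W :=
    fun _ => rfl
  constructor
  · intro i hi1 hi2
    simp only [SC.betti]
    have hsum : ∀ W ∈ Finset.univ.powersetCard (i + r),
        (((skel (Fin n) r).induce W).hdim K (i + r - i)) = (i + r - 1).choose r := by
      intro W hW
      have hWcard : W.card = i + r := (Finset.mem_powersetCard.1 hW).2
      have hWne : W.Nonempty := Finset.card_pos.1 (by omega)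
      rw [hind W, show i + r - i = r from by omega,
        BettiAux.hdim_SK K r hr hWne r, if_pos rfl, hWcard]
    rw [Finset.sum_congr rfl hsum, Finset.sum_const, Finset.card_powersetCard,
      Finset.card_univ, Fintype.card_fin, smul_eq_mul, mul_comm]
  · intro i d hd hne
    simp only [SC.betti]
    refine Finset.sum_eq_zero fun W hW => ?_
    have hWcard : W.card = i + d := (Finset.mem_powersetCard.1 hW).2
    have h0 : 0 < i + d := by
      rcases Nat.eq_zero_or_pos (i + d) with h | h
      · refine absurd ?_ hne
        have hi : i = 0 := by omega
        have hdz : d = 0 := by omega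
        rw [hi, hdz]
      · exact h
    have hWne : W.Nonempty := Finset.card_pos.1 (by omega)
    rw [hind W, show i + d - i = d from by omega,
      BettiAux.hdim_SK K r hr hWne d, if_neg hd]
end

section
/- Let r ≥ 1 and n ≥ r. The ideal I_r(K_{1,n}) of K[x_0, x_1, …, x_n] associated to the star graph K_{1,n} is generated by the monomials x_0 · x_{i_1} ⋯ x_{i_r} where {i_1, …, i_r} ranges over all r-subsets of [n], and its graded Betti numbers satisfy β_{i, i+r}(R/I_r(K_{1,n})) = C(i+r−2, r−1) · C(n, i+r−1) for 1 ≤ i ≤ n − r + 1, and β_{i,i+d}(R/I_r(K_{1,n})) = 0 for d ≠ r with (i,d) ≠ (0,0). -/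
open Finset

variable {V : Type*} [LinearOrder V] (K : Type*) [Field K]

/-- The Stanley–Reisner complex of the hyperedge ideal `I_r(K_{1,n})` of the star graph
with center `0`: the faces are the subsets `F` of `{0, 1, …, n}` such that if `0 ∈ F`
then `|F| ≤ r`. -/
def starSC (n r : ℕ) : SC (Fin (n + 1)) :=
  ⟨{F | 0 ∈ F → F.card ≤ r}, fun F G hF hGF h0 =>
    (Finset.card_le_card hGF).trans (hF (hGF h0))⟩

attribute [-instance] instDecidableEqFin

namespace StarBetti


variable {V : Type*} [LinearOrder V] (K : Type*) [Field K]

noncomputable def eps (S : Finset V) (x : V) : K := (-1) ^ (S.filter (fun y => y < x)).card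

noncomputable def DD : (Finset V →₀ K) →ₗ[K] (Finset V →₀ K) :=
  Finsupp.lsum K fun S => LinearMap.toSpanSingleton K _
    (∑ x ∈ S, eps K S x • Finsupp.single (S.erase x) (1 : K))

noncomputable def HH (v : V) : (Finset V →₀ K) →ₗ[K] (Finset V →₀ K) :=
  Finsupp.lsum K fun S => LinearMap.toSpanSingleton K _
    (if v ∈ S then 0 else eps K S v • Finsupp.single (insert v S) (1 : K))

lemma DD_single (S : Finset V) :
    DD K (Finsupp.single S (1 : K)) = ∑ x ∈ S, eps K S x • Finsupp.single (S.erase x) (1 : K) := by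
  simp [DD]

lemma HH_single (v : V) (S : Finset V) :
    HH K v (Finsupp.single S (1 : K)) =
      if v ∈ S then 0 else eps K S v • Finsupp.single (insert v S) (1 : K) := by
  simp [HH]

lemma eps_sq (S : Finset V) (x : V) : eps K S x * eps K S x = 1 := by
  rw [eps, ← pow_add, ← two_mul, pow_mul]
  simp

lemma filter_lt_erase_of_not_lt (S : Finset V) {x v : V} (h : ¬ x < v) :
    (S.erase x).filter (fun y => y < v) = S.filter (fun y => y < v) := by
  rw [Finset.filter_erase, Finset.erase_eq_of_notMem]
  simp [h]

lemma card_filter_lt_erase (S : Finset V) {x v : V} (hx : x ∈ S) (h : x < v) :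
    (S.filter (fun y => y < v)).card = ((S.erase x).filter (fun y => y < v)).card + 1 := by
  rw [Finset.filter_erase, Finset.card_erase_of_mem (by simp [hx, h])]
  have : 0 < (S.filter (fun y => y < v)).card := Finset.card_pos.2 ⟨x, by simp [hx, h]⟩
  omega

lemma card_filter_lt_insert (S : Finset V) {x v : V} (hv : v ∉ S) :
    ((insert v S).filter (fun y => y < x)).card =
      (S.filter (fun y => y < x)).card + (if v < x then 1 else 0) := by
  rw [Finset.filter_insert]
  by_cases h : v < x
  · rw [if_pos h, if_pos h, Finset.card_insert_of_notMem (by simp [hv])]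
  · rw [if_neg h, if_neg h, add_zero]

/-- Sign cancellation for `D ∘ D = 0`. -/
lemma eps_cancel₁ {S : Finset V} {x y : V} (hx : x ∈ S) (hy : y ∈ S) (hxy : x ≠ y) :
    eps K S x * eps K (S.erase x) y + eps K S y * eps K (S.erase y) x = 0 := by
  rcases lt_or_gt_of_ne hxy with h | h
  · have h1 := card_filter_lt_erase S hx h
    have h2 := filter_lt_erase_of_not_lt (v := x) S (asymm h)
    unfold eps
    rw [h1, h2, pow_succ]
    ring
  · have h1 := card_filter_lt_erase S hy h
    have h2 := filter_lt_erase_of_not_lt (v := y) S (asymm h)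
    unfold eps
    rw [h1, h2, pow_succ]
    ring

/-- Sign cancellation for the cone homotopy identity. -/
lemma eps_cancel₂ {S : Finset V} {x v : V} (hx : x ∈ S) (hv : v ∉ S) :
    eps K S v * eps K (insert v S) x + eps K S x * eps K (S.erase x) v = 0 := by
  have hxv : x ≠ v := fun h => hv (h ▸ hx)
  rcases lt_or_gt_of_ne hxv with h | h
  · -- x < v
    have h1 := card_filter_lt_erase S hx h
    have h2 := card_filter_lt_insert (x := x) S hv
    unfold eps
    rw [h2, if_neg (asymm h), h1, pow_succ]
    ring
  · -- v < x
    have h1 := filter_lt_erase_of_not_lt (v := v) S (asymm h)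
    have h2 := card_filter_lt_insert (x := x) S hv
    unfold eps
    rw [h2, if_pos h, h1, pow_succ]
    ring

lemma DD_DD : (DD K (V := V)) ∘ₗ (DD K) = 0 := by
  apply Finsupp.lhom_ext
  intro S b
  have hb : (Finsupp.single S b) = b • Finsupp.single S (1 : K) := by
    rw [Finsupp.smul_single, smul_eq_mul, mul_one]
  suffices h : DD K (DD K (Finsupp.single S (1 : K))) = 0 by
    rw [hb]; simp only [LinearMap.comp_apply, map_smul, h, smul_zero, LinearMap.zero_apply]
  rw [DD_single, map_sum]
  simp only [map_smul, DD_single]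
  have step : ∀ x ∈ S, (eps K S x • ∑ y ∈ S.erase x, eps K (S.erase x) y •
      Finsupp.single ((S.erase x).erase y) (1 : K)) =
      ∑ y ∈ S, (if y = x then 0 else (eps K S x * eps K (S.erase x) y) •
        Finsupp.single ((S.erase x).erase y) (1 : K)) := by
    intro x hx
    rw [Finset.smul_sum]
    refine Eq.trans ?_ (Finset.sum_erase (f := fun y => if y = x then 0 else
      (eps K S x * eps K (S.erase x) y) • Finsupp.single ((S.erase x).erase y) (1 : K))
      (a := x) S (by simp))
    refine Finset.sum_congr rfl fun y hy => ?_
    rw [if_neg (Finset.ne_of_mem_erase hy), smul_smul]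
  rw [Finset.sum_congr rfl step, ← Finset.sum_product']
  refine Finset.sum_involution (fun p _ => (p.2, p.1)) ?_ ?_ ?_ ?_
  · rintro ⟨x, y⟩ hp
    simp only [Finset.mem_product] at hp
    dsimp only
    by_cases h : y = x
    · subst h; simp
    · rw [if_neg h, if_neg (Ne.symm h)]
      rw [show (S.erase y).erase x = (S.erase x).erase y from Finset.erase_right_comm]
      rw [← add_smul, eps_cancel₁ K hp.1 hp.2 (Ne.symm h), zero_smul]
  · rintro ⟨x, y⟩ hp hne
    dsimp only at hne ⊢
    by_cases h : y = x
    · subst h; simp at hne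
    · simp only [Prod.mk.injEq, ne_eq, not_and]
      intro h1; exact absurd h1 h
  · rintro ⟨x, y⟩ hp
    simp only [Finset.mem_product] at hp ⊢
    exact ⟨hp.2, hp.1⟩
  · rintro ⟨x, y⟩ _; rfl

lemma DD_HH_id (v : V) :
    (DD K (V := V)) ∘ₗ (HH K v) + (HH K v) ∘ₗ (DD K) = LinearMap.id := by
  apply Finsupp.lhom_ext
  intro S b
  have hb : (Finsupp.single S b) = b • Finsupp.single S (1 : K) := by
    rw [Finsupp.smul_single, smul_eq_mul, mul_one]
  suffices h : DD K (HH K v (Finsupp.single S (1 : K))) +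
      HH K v (DD K (Finsupp.single S (1 : K))) = Finsupp.single S (1 : K) by
    rw [hb]
    simp only [LinearMap.add_apply, LinearMap.comp_apply, map_smul, LinearMap.id_apply,
      ← smul_add, h]
  by_cases hv : v ∈ S
  · rw [HH_single, if_pos hv, map_zero, zero_add, DD_single, map_sum]
    simp only [map_smul, HH_single]
    rw [Finset.sum_eq_single v]
    · rw [if_neg (Finset.notMem_erase v S), smul_smul, Finset.insert_erase hv]
      have : eps K (S.erase v) v = eps K S v := by
        unfold eps; rw [filter_lt_erase_of_not_lt S (lt_irrefl v)]
      rw [this, eps_sq, one_smul]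
    · intro x hx hxv
      rw [if_pos (Finset.mem_erase.2 ⟨Ne.symm hxv, hv⟩), smul_zero]
    · intro h; exact absurd hv h
  · have e2 : eps K (insert v S) v = eps K S v := by
      unfold eps; rw [Finset.filter_insert, if_neg (lt_irrefl v)]
    have hDH : DD K (HH K v (Finsupp.single S (1 : K))) = Finsupp.single S (1 : K) +
        ∑ x ∈ S, (eps K S v * eps K (insert v S) x) •
          Finsupp.single ((insert v S).erase x) (1 : K) := by
      rw [HH_single, if_neg hv, map_smul, DD_single, Finset.sum_insert hv, smul_add,
        Finset.smul_sum]
      congr 1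
      · rw [Finset.erase_insert hv, smul_smul, e2, eps_sq, one_smul]
      · exact Finset.sum_congr rfl fun x hx => smul_smul _ _ _
    have hHD : HH K v (DD K (Finsupp.single S (1 : K))) =
        ∑ x ∈ S, (eps K S x * eps K (S.erase x) v) •
          Finsupp.single (insert v (S.erase x)) (1 : K) := by
      rw [DD_single, map_sum]
      simp only [map_smul, HH_single]
      refine Finset.sum_congr rfl fun x hx => ?_
      rw [if_neg (fun h => hv (Finset.mem_of_mem_erase h)), smul_smul]
    rw [hDH, hHD, add_assoc, ← Finset.sum_add_distrib]
    have : ∀ x ∈ S, (eps K S v * eps K (insert v S) x) •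
        Finsupp.single ((insert v S).erase x) (1 : K) +
        (eps K S x * eps K (S.erase x) v) •
          Finsupp.single (insert v (S.erase x)) (1 : K) = 0 := by
      intro x hx
      have hxv : x ≠ v := fun h => hv (h ▸ hx)
      rw [Finset.erase_insert_of_ne (Ne.symm hxv), ← add_smul,
        eps_cancel₂ K hx hv, zero_smul]
    rw [Finset.sum_congr rfl this, Finset.sum_const_zero, add_zero]


section Upstairs

variable {V : Type*} [LinearOrder V] (K : Type*) [Field K] (Δ : SC V)

instance (k : ℕ) [Finite V] : Finite (Δ.face k) := by
  have := Fintype.ofFinite V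
  have := Classical.decEq V
  exact inferInstanceAs (Finite {F : Finset V // F ∈ Δ.faces ∧ F.card = k})

noncomputable instance (k : ℕ) [Finite V] : Module.Finite K (Δ.chain K k) := by
  infer_instance

/-- The injection of the face-indexed chain group into the free module on all finsets. -/
noncomputable def iota (k : ℕ) : Δ.chain K k →ₗ[K] (Finset V →₀ K) :=
  Finsupp.lmapDomain K K (Subtype.val : Δ.face k → Finset V)

lemma iota_injective (k : ℕ) : Function.Injective (iota K Δ k) :=
  Finsupp.mapDomain_injective Subtype.val_injective

lemma iota_single (k : ℕ) (F : Δ.face k) :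
    iota K Δ k (Finsupp.single F (1 : K)) = Finsupp.single F.1 (1 : K) := by
  exact Finsupp.mapDomain_single

lemma iota_comm (k : ℕ) :
    (iota K Δ k) ∘ₗ (Δ.bdry K k) = (DD K) ∘ₗ (iota K Δ (k + 1)) := by
  apply Finsupp.lhom_ext
  intro F b
  have hb : (Finsupp.single F b) = b • Finsupp.single F (1 : K) := by
    rw [Finsupp.smul_single, smul_eq_mul, mul_one]
  rw [hb]
  simp only [LinearMap.comp_apply, map_smul]
  congr 1
  rw [iota_single, DD_single, SC.bdry]
  erw [Finsupp.lsum_single, LinearMap.toSpanSingleton_apply_one, map_sum]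
  simp only [map_smul, iota, Finsupp.lmapDomain_apply, Finsupp.mapDomain_single]
  rw [← Finset.sum_attach F.1 (fun x => eps K F.1 x • Finsupp.single (F.1.erase x) (1 : K))]
  refine Finset.sum_congr rfl fun x _ => ?_
  erw [map_smul]
  exact congrArg (fun g => eps K F.1 x.1 • g) Finsupp.mapDomain_single

lemma iota_bdryTo_zero (x : Δ.chain K 0) : DD K (iota K Δ 0 x) = 0 := by
  have : (DD K) ∘ₗ (iota K Δ 0) = 0 := by
    apply Finsupp.lhom_ext
    intro F b
    have hF : F.1 = (∅ : Finset V) := Finset.card_eq_zero.1 F.2.2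
    have hb : (Finsupp.single F b) = b • Finsupp.single F (1 : K) := by
      rw [Finsupp.smul_single, smul_eq_mul, mul_one]
    rw [hb]
    simp only [LinearMap.comp_apply, map_smul, LinearMap.zero_apply]
    rw [iota_single, DD_single, hF]
    simp
  exact LinearMap.congr_fun this x

/-- `∂ ∘ ∂ = 0` upstairs. -/
lemma range_le_ker (k : ℕ) :
    LinearMap.range (Δ.bdry K k) ≤ LinearMap.ker (Δ.bdryTo K k) := by
  rintro x ⟨y, rfl⟩
  cases k with
  | zero => simp [SC.bdryTo]
  | succ k =>
    show Δ.bdry K k _ = 0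
    apply iota_injective K Δ k
    rw [map_zero, ← LinearMap.comp_apply, iota_comm, LinearMap.comp_apply,
      ← LinearMap.comp_apply (iota K Δ (k+1)), iota_comm, LinearMap.comp_apply,
      ← LinearMap.comp_apply (DD K), DD_DD, LinearMap.zero_apply]

/-- If every face of cardinality `k` can be coned off by `v`, the kernel at level `k`
is contained in the image of the boundary from level `k+1`. -/
lemma iota_subtypeDomain (k : ℕ) (f : Finset V →₀ K)
    (h : ∀ S ∈ f.support, S ∈ Δ.faces ∧ S.card = k) :
    iota K Δ k (Finsupp.subtypeDomain (fun F => F ∈ Δ.faces ∧ F.card = k) f) = f := by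
  ext S
  by_cases hS : S ∈ Δ.faces ∧ S.card = k
  · have := Finsupp.mapDomain_apply (Subtype.val_injective)
      (Finsupp.subtypeDomain (fun F : Finset V => F ∈ Δ.faces ∧ F.card = k) f)
      (⟨S, hS⟩ : {F : Finset V // F ∈ Δ.faces ∧ F.card = k})
    exact this
  · show Finsupp.mapDomain (Subtype.val : Δ.face k → Finset V) _ S = _
    rw [Finsupp.mapDomain_notin_range]
    · by_contra hfS
      exact hS (h S (Finsupp.mem_support_iff.2 fun h0 => hfS h0.symm))
    · rintro ⟨⟨T, hT⟩, rfl⟩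
      exact hS hT

/-- Cone condition: every face of cardinality `k` not containing `v` stays a face
after inserting `v`. -/
def ConeAt (Δ : SC V) (v : V) (k : ℕ) : Prop :=
  ∀ F : Δ.face k, v ∉ F.1 → insert v F.1 ∈ Δ.faces

lemma ker_le_range (k : ℕ) (v : V)
    (hcone : ∀ F : Δ.face k, v ∉ F.1 → insert v F.1 ∈ Δ.faces) :
    LinearMap.ker (Δ.bdryTo K k) ≤ LinearMap.range (Δ.bdry K k) := by
  classical
  intro x hx
  have hD : DD K (iota K Δ k x) = 0 := by
    cases k with
    | zero => exact iota_bdryTo_zero K Δ x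
    | succ k =>
      have : Δ.bdry K k x = 0 := hx
      rw [← LinearMap.comp_apply (DD K), ← iota_comm, LinearMap.comp_apply, this, map_zero]
  have happ : HH K v (iota K Δ k x) = (iota K Δ k x).sum fun S c =>
      c • (if v ∈ S then 0 else eps K S v • Finsupp.single (insert v S) (1 : K)) := by
    rw [HH, Finsupp.lsum_apply]
    exact Finsupp.sum_congr fun S _ => LinearMap.toSpanSingleton_apply K _ _ _
  have hsupp : ∀ S ∈ (HH K v (iota K Δ k x)).support, S ∈ Δ.faces ∧ S.card = k + 1 := by
    intro S hS
    rw [happ] at hS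
    obtain ⟨T, hT, hST⟩ := Finset.mem_biUnion.1 (Finsupp.support_sum hS)
    have hTx : T ∈ Δ.faces ∧ T.card = k := by
      have := Finsupp.mapDomain_support (f := Subtype.val)
        (s := x) hT
      obtain ⟨F, _, rfl⟩ := Finset.mem_image.1 this
      exact F.2
    by_cases hvT : v ∈ T
    · rw [if_pos hvT, smul_zero] at hST
      simp at hST
    · rw [if_neg hvT] at hST
      have : S = insert v T := by
        have h1 := Finsupp.support_smul (b := (iota K Δ k x) T)
          (g := eps K T v • Finsupp.single (insert v T) (1 : K)) hST
        have h2 := Finsupp.support_smul (b := eps K T v)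
          (g := Finsupp.single (insert v T) (1 : K)) h1
        simpa using Finsupp.mem_support_iff.1 h2 |> fun _ =>
          Finset.mem_singleton.1 (Finsupp.support_single_subset h2)
      subst this
      refine ⟨hcone ⟨T, hTx⟩ hvT, ?_⟩
      rw [Finset.card_insert_of_notMem hvT, hTx.2]
  set p : Finset V → Prop := fun F => F ∈ Δ.faces ∧ F.card = k + 1 with hp
  set y : Δ.chain K (k + 1) := Finsupp.subtypeDomain p (HH K v (iota K Δ k x)) with hy0
  have hy : iota K Δ (k + 1) y = HH K v (iota K Δ k x) :=
    iota_subtypeDomain K Δ (k + 1) _ hsupp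
  refine ⟨y, ?_⟩
  apply iota_injective K Δ k
  rw [← LinearMap.comp_apply, iota_comm, LinearMap.comp_apply, hy]
  have := LinearMap.congr_fun (DD_HH_id K v) (iota K Δ k x)
  simp only [LinearMap.add_apply, LinearMap.comp_apply, LinearMap.id_apply, hD, map_zero,
    add_zero] at this
  exact this

/-- rank–nullity bookkeeping helper. -/
lemma finrank_chain_eq [Fintype V] (k : ℕ) (X : Finset (Finset V))
    (h : ∀ F : Finset V, (F ∈ Δ.faces ∧ F.card = k) ↔ F ∈ X) :
    Module.finrank K (Δ.chain K k) = X.card := by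
  classical
  have e : Δ.face k ≃ {F : Finset V // F ∈ X} :=
    Equiv.subtypeEquivRight h
  have : Module.finrank K (Δ.chain K k) = Module.finrank K ({F : Finset V // F ∈ X} →₀ K) :=
    LinearEquiv.finrank_eq (Finsupp.domLCongr e)
  rw [this, Module.finrank_finsupp_self, Fintype.card_coe]

end Upstairs

section HdimLemmas

variable {V : Type*} [LinearOrder V] (K : Type*) [Field K]

lemma hdim_eq_zero_of_cone [Fintype V] (Δ : SC V) (k : ℕ) (v : V)
    (hcone : ConeAt Δ v k) :
    Δ.hdim K k = 0 := by
  have h := ker_le_range K Δ k v hcone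
  exact Nat.sub_eq_zero_of_le (Submodule.finrank_mono h)

lemma hdim_eq (Δ : SC V) (k : ℕ) :
    Δ.hdim K k = Module.finrank K (LinearMap.ker (Δ.bdryTo K k)) -
      Module.finrank K (LinearMap.range (Δ.bdry K k)) := rfl

lemma finrank_ker_eq_of_cone [Fintype V] (Δ : SC V) (k : ℕ) (v : V)
    (hcone : ConeAt Δ v k) :
    Module.finrank K (LinearMap.ker (Δ.bdryTo K k)) =
      Module.finrank K (LinearMap.range (Δ.bdry K k)) :=
  le_antisymm (Submodule.finrank_mono (ker_le_range K Δ k v hcone))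
    (Submodule.finrank_mono (range_le_ker K Δ k))

lemma rank_nullity (Δ : SC V) [Fintype V] (k : ℕ) :
    Module.finrank K (LinearMap.range (Δ.bdry K k)) +
      Module.finrank K (LinearMap.ker (Δ.bdryTo K (k + 1))) =
      Module.finrank K (Δ.chain K (k + 1)) :=
  LinearMap.finrank_range_add_finrank_ker (Δ.bdry K k)

lemma finrank_ker_zero (Δ : SC V) [Fintype V] :
    Module.finrank K (LinearMap.ker (Δ.bdryTo K 0)) = Module.finrank K (Δ.chain K 0) := by
  have : Δ.bdryTo K 0 = 0 := rfl
  rw [this, LinearMap.ker_zero, finrank_top]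

end HdimLemmas

section Star

variable (K : Type*) [Field K] (n r : ℕ)

lemma mem_induce_star (W F : Finset (Fin (n + 1))) :
    F ∈ ((starSC n r).induce W).faces ↔ (0 ∈ F → F.card ≤ r) ∧ F ⊆ W := Iff.rfl

lemma star_count_le (W : Finset (Fin (n + 1))) {k : ℕ} (hk : k ≤ r) :
    Module.finrank K (((starSC n r).induce W).chain K k) = W.card.choose k := by
  rw [finrank_chain_eq K _ k (W.powersetCard k) (fun F => ?_), Finset.card_powersetCard]
  rw [Finset.mem_powersetCard, mem_induce_star]
  constructor
  · rintro ⟨⟨_, h2⟩, h3⟩; exact ⟨h2, h3⟩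
  · rintro ⟨h1, h2⟩; exact ⟨⟨fun _ => h2 ▸ hk, h1⟩, h2⟩

lemma star_count_gt (W : Finset (Fin (n + 1))) {k : ℕ} (hk : r < k) :
    Module.finrank K (((starSC n r).induce W).chain K k) = ((W.erase 0).card).choose k := by
  rw [finrank_chain_eq K _ k ((W.erase 0).powersetCard k) (fun F => ?_),
    Finset.card_powersetCard]
  rw [Finset.mem_powersetCard, mem_induce_star]
  constructor
  · rintro ⟨⟨h1, h2⟩, h3⟩
    have h0F : 0 ∉ F := fun h0 => by have := h1 h0; omega
    exact ⟨Finset.subset_erase.2 ⟨h2, h0F⟩, h3⟩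
  · rintro ⟨h1, h2⟩
    have h0F : 0 ∉ F := fun h0 => (Finset.notMem_erase 0 W) (h1 h0)
    exact ⟨⟨fun h0 => absurd h0 h0F, (h1.trans (Finset.erase_subset _ _))⟩, h2⟩

lemma star_cone_not_mem (W : Finset (Fin (n + 1))) (h0 : 0 ∉ W) {v : Fin (n + 1)}
    (hv : v ∈ W) (k : ℕ) :
    ConeAt ((starSC n r).induce W) v k := by
  rintro ⟨F, hF, hFk⟩ hvF
  refine ⟨fun h0i => ?_, Finset.insert_subset hv hF.2⟩
  exact absurd (hF.2 ((Finset.mem_insert.1 h0i).resolve_left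
    (fun h => h0 (h ▸ hv)) )) (fun hh => h0 hh)

lemma star_cone_small (W : Finset (Fin (n + 1))) (h0 : 0 ∈ W) (hWr : W.card ≤ r) (k : ℕ) :
    ConeAt ((starSC n r).induce W) 0 k := by
  rintro ⟨F, hF, hFk⟩ hvF
  have hsub : insert 0 F ⊆ W := Finset.insert_subset h0 hF.2
  exact ⟨fun _ => (Finset.card_le_card hsub).trans hWr, hsub⟩

lemma star_cone_low (W : Finset (Fin (n + 1))) (h0 : 0 ∈ W) {k : ℕ} (hk : k < r) :
    ConeAt ((starSC n r).induce W) 0 k := by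
  rintro ⟨F, hF, hFk⟩ hvF
  refine ⟨fun _ => ?_, Finset.insert_subset h0 hF.2⟩
  rw [Finset.card_insert_of_notMem hvF, hFk]
  omega

lemma star_cone_high (W : Finset (Fin (n + 1))) {v : Fin (n + 1)} (hv : v ∈ W) (hv0 : v ≠ 0)
    {k : ℕ} (hk : r < k) :
    ConeAt ((starSC n r).induce W) v k := by
  rintro ⟨F, hF, hFk⟩ hvF
  have h0F : 0 ∉ F := fun h0 => by have := hF.1 h0; omega
  refine ⟨fun h0i => ?_, Finset.insert_subset hv hF.2⟩
  rcases Finset.mem_insert.1 h0i with h | h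
  · exact absurd h.symm hv0
  · exact absurd h h0F

end Star

section Main

variable (K : Type*) [Field K] (n r : ℕ)

lemma star_hdim_not_mem (W : Finset (Fin (n + 1))) (hW : W.Nonempty) (h0 : 0 ∉ W) (k : ℕ) :
    ((starSC n r).induce W).hdim K k = 0 := by
  obtain ⟨v, hv⟩ := hW
  exact hdim_eq_zero_of_cone K _ k v (star_cone_not_mem n r W h0 hv k)

lemma star_hdim_small (W : Finset (Fin (n + 1))) (h0 : 0 ∈ W) (hWr : W.card ≤ r) (k : ℕ) :
    ((starSC n r).induce W).hdim K k = 0 :=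
  hdim_eq_zero_of_cone K _ k 0 (star_cone_small n r W h0 hWr k)

lemma star_hdim_ne (W : Finset (Fin (n + 1))) (hr : 1 ≤ r) (h0 : 0 ∈ W) {k : ℕ} (hk : k ≠ r) :
    ((starSC n r).induce W).hdim K k = 0 := by
  rcases le_or_gt W.card r with hWr | hWr
  · exact star_hdim_small K n r W h0 hWr k
  rcases lt_or_gt_of_ne hk with h | h
  · exact hdim_eq_zero_of_cone K _ k 0 (star_cone_low n r W h0 h)
  · obtain ⟨v, hv⟩ : (W.erase 0).Nonempty :=
      Finset.card_pos.1 (by rw [Finset.card_erase_of_mem h0]; omega)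
    exact hdim_eq_zero_of_cone K _ k v
      (star_cone_high n r W (Finset.mem_of_mem_erase hv) (Finset.ne_of_mem_erase hv) h)

lemma star_hdim_r (W : Finset (Fin (n + 1))) (hr : 1 ≤ r) (h0 : 0 ∈ W) (hw : r < W.card) :
    ((starSC n r).induce W).hdim K r = (W.card - 2).choose (r - 1) := by
  classical
  set Γ := (starSC n r).induce W with hΓ
  set w := W.card with hwdef
  have hw2 : 2 ≤ w := by omega
  obtain ⟨v, hvW, hv0⟩ : ∃ v ∈ W, v ≠ 0 := by
    obtain ⟨v, hv⟩ : (W.erase 0).Nonempty :=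
      Finset.card_pos.1 (by rw [Finset.card_erase_of_mem h0]; omega)
    exact ⟨v, Finset.mem_of_mem_erase hv, Finset.ne_of_mem_erase hv⟩
  have hcerase : (W.erase 0).card = w - 1 := by rw [Finset.card_erase_of_mem h0]
  have hcle : ∀ k, k ≤ r → Module.finrank K (Γ.chain K k) = w.choose k :=
    fun k hk => star_count_le K n r W hk
  have hcgt : ∀ k, r < k → Module.finrank K (Γ.chain K k) = (w - 1).choose k :=
    fun k hk => by rw [star_count_gt K n r W hk, hcerase]
  have hlow : ∀ k, k < r → Module.finrank K (LinearMap.ker (Γ.bdryTo K k)) =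
      Module.finrank K (LinearMap.range (Γ.bdry K k)) :=
    fun k hk => finrank_ker_eq_of_cone K Γ k 0 (star_cone_low n r W h0 hk)
  have hhigh : ∀ k, r < k → Module.finrank K (LinearMap.ker (Γ.bdryTo K k)) =
      Module.finrank K (LinearMap.range (Γ.bdry K k)) :=
    fun k hk => finrank_ker_eq_of_cone K Γ k v (star_cone_high n r W hvW hv0 hk)
  have hRlow : ∀ k, k < r → Module.finrank K (LinearMap.range (Γ.bdry K k)) =
      (w - 1).choose k := by
    intro k
    induction k with
    | zero =>
      intro hk
      rw [← hlow 0 hk, finrank_ker_zero, hcle 0 (by omega)]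
      simp
    | succ k ih =>
      intro hk
      have h1 := rank_nullity K Γ k
      have h2 := ih (by omega)
      have h3 := hlow (k + 1) hk
      have h4 := hcle (k + 1) (by omega)
      have pascal : (w - 1).choose k + (w - 1).choose (k + 1) = w.choose (k + 1) := by
        have hww : w - 1 + 1 = w := by omega
        have := Nat.choose_succ_succ' (w - 1) k
        rw [hww] at this
        omega
      omega
  obtain ⟨s, rfl⟩ : ∃ s, r = s + 1 := ⟨r - 1, by omega⟩
  have hKr : Module.finrank K (LinearMap.ker (Γ.bdryTo K (s + 1))) = (w - 1).choose (s + 1) := by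
    have h1 := rank_nullity K Γ s
    have h2 := hRlow s (by omega)
    have h4 := hcle (s + 1) le_rfl
    have pascal : (w - 1).choose s + (w - 1).choose (s + 1) = w.choose (s + 1) := by
      have hww : w - 1 + 1 = w := by omega
      have := Nat.choose_succ_succ' (w - 1) s
      rw [hww] at this
      omega
    omega
  have hRhigh : ∀ t k, s + 1 ≤ k → w - 1 ≤ k + t →
      Module.finrank K (LinearMap.range (Γ.bdry K k)) = (w - 2).choose k := by
    intro t
    induction t with
    | zero =>
      intro k hk hkw
      have hb : Module.finrank K (LinearMap.range (Γ.bdry K k)) ≤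
          Module.finrank K (Γ.chain K (k + 1)) := (Γ.bdry K k).finrank_range_le
      rw [hcgt (k + 1) (by omega), Nat.choose_eq_zero_of_lt (by omega)] at hb
      rw [Nat.choose_eq_zero_of_lt (by omega)]
      omega
    | succ t ih =>
      intro k hk hkw
      rcases le_or_gt (w - 1) (k + t) with h | h
      · exact ih k hk h
      · have h1 := rank_nullity K Γ k
        have h2 := hhigh (k + 1) (by omega)
        have h3 := ih (k + 1) (by omega) (by omega)
        have h4 := hcgt (k + 1) (by omega)
        have pascal : (w - 2).choose k + (w - 2).choose (k + 1) = (w - 1).choose (k + 1) := by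
          have hww : w - 2 + 1 = w - 1 := by omega
          have := Nat.choose_succ_succ' (w - 2) k
          rw [hww] at this
          omega
        omega
  have hRr := hRhigh w (s + 1) le_rfl (by omega)
  have pascal : (w - 2).choose s + (w - 2).choose (s + 1) = (w - 1).choose (s + 1) := by
    have hww : w - 2 + 1 = w - 1 := by omega
    have := Nat.choose_succ_succ' (w - 2) s
    rw [hww] at this
    omega
  rw [hdim_eq, hKr, hRr]
  have : s + 1 - 1 = s := rfl
  rw [this]
  omega

end Main


section Count

lemma card_filter_zero_mem (n j : ℕ) (hj : 1 ≤ j) :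
    (((Finset.univ : Finset (Fin (n + 1))).powersetCard j).filter
      (fun W => (0 : Fin (n + 1)) ∈ W)).card = n.choose (j - 1) := by
  classical
  have hcard := Finset.card_bij
    (s := ((Finset.univ : Finset (Fin (n + 1))).powersetCard j).filter
      (fun W => (0 : Fin (n + 1)) ∈ W))
    (t := ((Finset.univ : Finset (Fin (n + 1))).erase 0).powersetCard (j - 1))
    (i := fun W _ => W.erase 0) ?_ ?_ ?_
  · rw [hcard, Finset.card_powersetCard, Finset.card_erase_of_mem (Finset.mem_univ 0),
      Finset.card_univ, Fintype.card_fin]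
    simp
  · intro W hW
    simp only [Finset.mem_filter, Finset.mem_powersetCard_univ] at hW
    rw [Finset.mem_powersetCard]
    exact ⟨Finset.erase_subset_erase 0 (Finset.subset_univ W),
      by rw [Finset.card_erase_of_mem hW.2, hW.1]⟩
  · intro W₁ h₁ W₂ h₂ heq
    simp only [Finset.mem_filter, Finset.mem_powersetCard_univ] at h₁ h₂
    rw [← Finset.insert_erase h₁.2, show W₁.erase 0 = W₂.erase 0 from heq,
      Finset.insert_erase h₂.2]
  · intro T hT
    rw [Finset.mem_powersetCard] at hT
    have h0T : (0 : Fin (n + 1)) ∉ T := fun h => Finset.notMem_erase 0 _ (hT.1 h)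
    refine ⟨insert 0 T, ?_, Finset.erase_insert h0T⟩
    simp only [Finset.mem_filter, Finset.mem_powersetCard_univ]
    refine ⟨?_, Finset.mem_insert_self 0 T⟩
    rw [Finset.card_insert_of_notMem h0T, hT.2]
    omega

end Count

end StarBetti

/-- For the star graph `K_{1,n}` and `r ≥ 1`, `n ≥ r`: the ideal `I_r(K_{1,n})` is
generated by the monomials `x_0 x_{i_1} ⋯ x_{i_r}` (equivalently, the non-faces of its
Stanley–Reisner complex are the sets containing a set `G` with `0 ∈ G`, `|G| = r + 1`),
and `β_{i,i+r}(R/I_r(K_{1,n})) = C(i+r-2, r-1) · C(n, i+r-1)` for `1 ≤ i ≤ n - r + 1`,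
while `β_{i,i+d} = 0` for `d ≠ r` with `(i,d) ≠ (0,0)`. -/
theorem betti_star (K : Type*) [Field K] (n r : ℕ) (hr : 1 ≤ r) (hn : r ≤ n) :
    {F : Finset (Fin (n + 1)) | F ∉ (starSC n r).faces} =
      {F : Finset (Fin (n + 1)) | ∃ G ⊆ F, 0 ∈ G ∧ G.card = r + 1} ∧
    (∀ i : ℕ, 1 ≤ i → i ≤ n - r + 1 →
      (starSC n r).betti K i (i + r) = (i + r - 2).choose (r - 1) * n.choose (i + r - 1)) ∧
    (∀ i d : ℕ, d ≠ r → (i, d) ≠ (0, 0) → (starSC n r).betti K i (i + d) = 0) := by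
  classical
  refine ⟨?_, ?_, ?_⟩
  · ext F
    simp only [Set.mem_setOf_eq]
    constructor
    · intro hF
      have h : 0 ∈ F ∧ r + 1 ≤ F.card := by
        by_contra hc
        exact hF (fun h0 => by_contra fun hcard => hc ⟨h0, by omega⟩)
      obtain ⟨h0F, hcard⟩ := h
      have hsub : r ≤ (F.erase 0).card := by
        rw [Finset.card_erase_of_mem h0F]; omega
      obtain ⟨T, hT, hTcard⟩ := Finset.exists_subset_card_eq hsub
      refine ⟨insert 0 T, Finset.insert_subset h0F (hT.trans (Finset.erase_subset _ _)),
        Finset.mem_insert_self 0 T, ?_⟩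
      rw [Finset.card_insert_of_notMem (fun h => Finset.notMem_erase 0 F (hT h)), hTcard]
    · rintro ⟨G, hGF, hG0, hGcard⟩ hF
      have h1 := hF (hGF hG0)
      have h2 := Finset.card_le_card hGF
      omega
  · intro i hi1 hi2
    unfold SC.betti
    have hstep : ∀ W ∈ (Finset.univ : Finset (Fin (n + 1))).powersetCard (i + r),
        ((starSC n r).induce W).hdim K ((i + r) - i) =
          if (0 : Fin (n + 1)) ∈ W then (i + r - 2).choose (r - 1) else 0 := by
      intro W hW
      have hWcard : W.card = i + r := (Finset.mem_powersetCard.1 hW).2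
      have hsub : i + r - i = r := by omega
      rw [hsub]
      by_cases h0 : (0 : Fin (n + 1)) ∈ W
      · rw [if_pos h0, StarBetti.star_hdim_r K n r W hr h0 (by omega), hWcard]
      · rw [if_neg h0,
          StarBetti.star_hdim_not_mem K n r W (Finset.card_pos.1 (by omega)) h0]
    rw [Finset.sum_congr rfl hstep, ← Finset.sum_filter, Finset.sum_const,
      StarBetti.card_filter_zero_mem n (i + r) (by omega), smul_eq_mul, mul_comm]
  · intro i d hd hne
    unfold SC.betti
    apply Finset.sum_eq_zero
    intro W hW
    have hWcard : W.card = i + d := (Finset.mem_powersetCard.1 hW).2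
    have hsub : i + d - i = d := by omega
    rw [hsub]
    by_cases h0 : (0 : Fin (n + 1)) ∈ W
    · exact StarBetti.star_hdim_ne K n r W hr h0 hd
    · refine StarBetti.star_hdim_not_mem K n r W (Finset.card_pos.1 ?_) h0 d
      have hne' : ¬ (i = 0 ∧ d = 0) := fun ⟨h1, h2⟩ => hne (by rw [h1, h2])
      omega
end

section
/- Let n1, n2 ≥ 1 and r ≥ 1. For the complete bipartite graph K_{n1,n2}, the graded Betti numbers of R/I_r(K_{n1,n2}) satisfy β_{i,i+r}(R/I_r(K_{n1,n2})) = C(n1+n2, i+r) · C(i+r−1, r) − ∑_{(j1,j2) ∈ ℕ², j1+j2 = i+r} C(n1, j1) C(n2, j2) [C(j1−1, r) + C(j2−1, r)], and β_{i,i+d}(R/I_r(K_{n1,n2})) = 0 for d ≠ r with (i,d) ≠ (0,0). -/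
open Finset

variable {V : Type*} [LinearOrder V] (K : Type*) [Field K]

/-- A linear order on the vertex set `Fin n1 ⊕ Fin n2` of the complete bipartite graph. -/
noncomputable instance sumLinearOrder (n1 n2 : ℕ) : LinearOrder (Fin n1 ⊕ Fin n2) :=
  LinearOrder.lift' (finSumFinEquiv : Fin n1 ⊕ Fin n2 ≃ Fin (n1 + n2))
    finSumFinEquiv.injective

/-- The Stanley–Reisner complex of the hyperedge ideal `I_r(K_{n1,n2})` of the complete
bipartite graph: the `r`-independent sets, i.e. the subsets `F` of the vertices with
`|F| ≤ r`, or `F` contained in one side of the bipartition. -/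
def bipSC (n1 n2 r : ℕ) : SC (Fin n1 ⊕ Fin n2) :=
  ⟨{F | F.card ≤ r ∨ (∀ x ∈ F, x.isLeft) ∨ (∀ x ∈ F, x.isRight)}, by
    rintro F G hF hGF
    rcases hF with h | h | h
    · exact Or.inl ((Finset.card_le_card hGF).trans h)
    · exact Or.inr (Or.inl fun x hx => h x (hGF hx))
    · exact Or.inr (Or.inr fun x hx => h x (hGF hx))⟩

section Dev

open Finsupp LinearMap Module

variable {V : Type*} [LinearOrder V] (K : Type*) [Field K]

/-- The full simplex on a finite vertex set `S`. -/
def simplexSC (S : Finset V) : SC V :=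
  ⟨{F | F ⊆ S}, fun _ _ hF hGF => hGF.trans hF⟩

lemma mem_simplexSC {S F : Finset V} : F ∈ (simplexSC S).faces ↔ F ⊆ S := Iff.rfl

instance SC.instFiniteFace [Finite V] (Δ : SC V) (k : ℕ) : Finite (Δ.face k) := by
  have := Fintype.ofFinite V
  unfold SC.face
  exact Subtype.finite

instance SC.instFiniteChain [Finite V] (Δ : SC V) (k : ℕ) :
    Module.Finite K (Δ.chain K k) := by
  have := Fintype.ofFinite (Δ.face k)
  infer_instance

lemma SC.finrank_chain [Finite V] (Δ : SC V) (k : ℕ) :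
    finrank K (Δ.chain K k) = Nat.card (Δ.face k) := by
  have := Fintype.ofFinite (Δ.face k)
  rw [Module.finrank_finsupp_self, Nat.card_eq_fintype_card]

open scoped Classical in
/-- `Finsupp.single ⟨G, _⟩ 1` when `G` is a face of cardinality `k`, else `0`. -/
noncomputable def SC.gen (Δ : SC V) (k : ℕ) (G : Finset V) : Δ.chain K k :=
  if h : G ∈ Δ.faces ∧ G.card = k then Finsupp.single ⟨G, h⟩ 1 else 0

lemma SC.gen_of_mem (Δ : SC V) {k : ℕ} {G : Finset V} (h : G ∈ Δ.faces ∧ G.card = k) :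
    Δ.gen K k G = Finsupp.single (α := Δ.face k) ⟨G, h⟩ 1 := by
  rw [SC.gen, dif_pos h]

lemma SC.gen_of_not_mem (Δ : SC V) {k : ℕ} {G : Finset V}
    (h : ¬(G ∈ Δ.faces ∧ G.card = k)) : Δ.gen K k G = 0 := by
  rw [SC.gen, dif_neg h]

lemma SC.bdry_single (Δ : SC V) (k : ℕ) (F : Δ.face (k + 1)) :
    Δ.bdry K k (Finsupp.single F 1) =
      ∑ x ∈ F.1, ((-1 : K) ^ ((F.1.filter (fun y => y < x)).card)) •
        Δ.gen K k (F.1.erase x) := by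
  rw [SC.bdry, Finsupp.lsum_single, LinearMap.toSpanSingleton_apply_one]
  rw [← Finset.sum_attach F.1 (fun x => ((-1 : K) ^ ((F.1.filter (fun y => y < x)).card)) •
        Δ.gen K k (F.1.erase x))]
  refine Finset.sum_congr rfl fun x _ => ?_
  rw [Δ.gen_of_mem K ⟨Δ.down F.2.1 (Finset.erase_subset _ _), by
    simp [Finset.card_erase_of_mem x.2, F.2.2]⟩]
  rfl

lemma SC.bdry_gen (Δ : SC V) (k : ℕ) {G : Finset V} (h : G ∈ Δ.faces ∧ G.card = k + 1) :
    Δ.bdry K k (Δ.gen K (k + 1) G) =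
      ∑ x ∈ G, ((-1 : K) ^ ((G.filter (fun y => y < x)).card)) •
        Δ.gen K k (G.erase x) := by
  rw [Δ.gen_of_mem K h]
  erw [Δ.bdry_single K]

/-- The sign cancellation identity. -/
lemma sign_lemma {s : Finset V} {x y : V} (hx : x ∈ s) (hy : y ∈ s) (hxy : y < x) :
    ((-1 : K) ^ ((s.filter (fun z => z < x)).card)) *
      ((-1 : K) ^ (((s.erase x).filter (fun z => z < y)).card)) =
    -(((-1 : K) ^ ((s.filter (fun z => z < y)).card)) *
      ((-1 : K) ^ (((s.erase y).filter (fun z => z < x)).card))) := by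
  classical
  have h1 : (s.erase x).filter (fun z => z < y) = s.filter (fun z => z < y) := by
    rw [Finset.filter_erase]
    exact Finset.erase_eq_of_notMem (by simp [asymm hxy])
  have h2 : (s.erase y).filter (fun z => z < x) = (s.filter (fun z => z < x)).erase y := by
    rw [Finset.filter_erase]
  have hy' : y ∈ s.filter (fun z => z < x) := Finset.mem_filter.2 ⟨hy, hxy⟩
  have h3 : (s.filter (fun z => z < x)).card = ((s.filter (fun z => z < x)).erase y).card + 1 := by
    rw [Finset.card_erase_of_mem hy']
    have : 1 ≤ (s.filter (fun z => z < x)).card := Finset.card_pos.2 ⟨y, hy'⟩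
    omega
  rw [h1, h2, h3, pow_succ]
  ring

lemma SC.bdry_bdry (Δ : SC V) (k : ℕ) :
    Δ.bdry K k ∘ₗ Δ.bdry K (k + 1) = 0 := by
  refine Finsupp.lhom_ext' fun F => LinearMap.ext_ring ?_
  simp only [LinearMap.comp_apply, Finsupp.lsingle_apply, LinearMap.zero_apply]
  rw [Δ.bdry_single K, map_sum]
  have herase : ∀ x ∈ F.1, F.1.erase x ∈ Δ.faces ∧ (F.1.erase x).card = k + 1 := fun x hx =>
    ⟨Δ.down F.2.1 (Finset.erase_subset _ _), by simp [Finset.card_erase_of_mem hx, F.2.2]⟩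
  calc ∑ x ∈ F.1, Δ.bdry K k ((-1 : K) ^ ((F.1.filter (fun y => y < x)).card) •
          Δ.gen K (k+1) (F.1.erase x))
      = ∑ x ∈ F.1, ∑ y ∈ F.1.erase x,
          (((-1 : K) ^ ((F.1.filter (fun z => z < x)).card)) *
            ((-1 : K) ^ (((F.1.erase x).filter (fun z => z < y)).card))) •
          Δ.gen K k ((F.1.erase x).erase y) := by
        refine Finset.sum_congr rfl fun x hx => ?_
        rw [map_smul, Δ.bdry_gen K k (herase x hx), Finset.smul_sum]
        exact Finset.sum_congr rfl fun y _ => by rw [smul_smul]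
    _ = ∑ p ∈ F.1.sigma (fun x => F.1.erase x),
          (((-1 : K) ^ ((F.1.filter (fun z => z < p.1)).card)) *
            ((-1 : K) ^ (((F.1.erase p.1).filter (fun z => z < p.2)).card))) •
          Δ.gen K k ((F.1.erase p.1).erase p.2) := by
        rw [Finset.sum_sigma]
    _ = 0 := ?_
  refine Finset.sum_involution (fun p hp => ⟨p.2, p.1⟩) ?_ ?_ ?_ ?_
  · rintro ⟨x, y⟩ hp
    simp only [Finset.mem_sigma, Finset.mem_erase] at hp
    obtain ⟨hx, hyx, hy⟩ := hp
    have hne : y ≠ x := hyx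
    rcases lt_or_gt_of_ne hne with h | h
    · rw [Finset.erase_right_comm (a := x)]
      rw [sign_lemma K hx hy h, neg_smul, neg_add_cancel]
    · rw [Finset.erase_right_comm (a := x), sign_lemma K hy hx h, neg_smul, add_neg_cancel]
  · rintro ⟨x, y⟩ hp _
    simp only [Finset.mem_sigma, Finset.mem_erase] at hp
    exact fun h => hp.2.1 (congrArg Sigma.fst h)
  · rintro ⟨x, y⟩ hp
    simp only [Finset.mem_sigma, Finset.mem_erase] at hp ⊢
    exact ⟨hp.2.2, fun h => hp.2.1 h.symm, hp.1⟩
  · rintro ⟨x, y⟩ hp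
    rfl

end Dev

section Dev2

open Finsupp LinearMap Module

variable {V : Type*} [LinearOrder V] (K : Type*) [Field K]

/-- The cone contraction map for the full simplex, coning on the minimum vertex. -/
noncomputable def coneMap (S : Finset V) (hS : S.Nonempty) (k : ℕ) :
    (simplexSC S).chain K k →ₗ[K] (simplexSC S).chain K (k + 1) :=
  Finsupp.lsum K fun F => LinearMap.toSpanSingleton K _
    ((simplexSC S).gen K (k + 1) (insert (S.min' hS) F.1))

lemma coneMap_single (S : Finset V) (hS : S.Nonempty) (k : ℕ) (F : (simplexSC S).face k) :
    coneMap K S hS k (Finsupp.single F 1) =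
      (simplexSC S).gen K (k + 1) (insert (S.min' hS) F.1) := by
  rw [coneMap, Finsupp.lsum_single, LinearMap.toSpanSingleton_apply_one]

lemma coneMap_gen (S : Finset V) (hS : S.Nonempty) (k : ℕ) {G : Finset V}
    (h : G ∈ (simplexSC S).faces ∧ G.card = k) :
    coneMap K S hS k ((simplexSC S).gen K k G) =
      (simplexSC S).gen K (k + 1) (insert (S.min' hS) G) := by
  rw [(simplexSC S).gen_of_mem K h]
  erw [coneMap_single]

lemma cone_identity (S : Finset V) (hS : S.Nonempty) (k : ℕ) :
    (simplexSC S).bdry K (k + 1) ∘ₗ coneMap K S hS (k + 1) +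
      coneMap K S hS k ∘ₗ (simplexSC S).bdry K k = LinearMap.id := by
  classical
  refine Finsupp.lhom_ext' fun F => LinearMap.ext_ring ?_
  simp only [LinearMap.add_apply, LinearMap.comp_apply, Finsupp.lsingle_apply,
    LinearMap.id_apply]
  set v0 := S.min' hS with hv0
  have hFS : F.1 ⊆ S := F.2.1
  have hv0S : v0 ∈ S := S.min'_mem hS
  have hmin : ∀ y ∈ F.1, ¬ y < v0 := fun y hy => not_lt.2 (S.min'_le y (hFS hy))
  have hcard : F.1.card = k + 1 := F.2.2
  have herase : ∀ x ∈ F.1, F.1.erase x ∈ (simplexSC S).faces ∧ (F.1.erase x).card = k :=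
    fun x hx => ⟨(Finset.erase_subset _ _).trans hFS, by
      simp [Finset.card_erase_of_mem hx, hcard]⟩
  -- compute the second summand
  have hsecond : coneMap K S hS k ((simplexSC S).bdry K k (Finsupp.single F 1)) =
      ∑ x ∈ F.1, ((-1 : K) ^ ((F.1.filter (fun y => y < x)).card)) •
        (simplexSC S).gen K (k + 1) (insert v0 (F.1.erase x)) := by
    rw [(simplexSC S).bdry_single K, map_sum]
    exact Finset.sum_congr rfl fun x hx => by
      rw [map_smul, coneMap_gen K S hS k (herase x hx)]
  by_cases hv : v0 ∈ F.1
  · have h1 : insert v0 F.1 = F.1 := Finset.insert_eq_self.2 hv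
    rw [coneMap_single, h1, (simplexSC S).gen_of_not_mem K (by simp [hcard]), map_zero,
      zero_add, hsecond]
    rw [Finset.sum_eq_single_of_mem v0 hv ?side]
    case side =>
      intro x hx hxv
      have : insert v0 (F.1.erase x) = F.1.erase x :=
        Finset.insert_eq_self.2 (Finset.mem_erase.2 ⟨Ne.symm hxv, hv⟩)
      rw [this, (simplexSC S).gen_of_not_mem K (by
        simp [Finset.card_erase_of_mem hx, hcard]), smul_zero]
    · rw [Finset.insert_erase hv, Finset.filter_eq_empty_iff.2 hmin]
      rw [(simplexSC S).gen_of_mem K ⟨F.2.1, hcard⟩, Finset.card_empty, pow_zero]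
      exact one_smul K _
  · -- v0 ∉ F.1
    have hins : insert v0 F.1 ∈ (simplexSC S).faces ∧ (insert v0 F.1).card = k + 1 + 1 := by
      refine ⟨Finset.insert_subset hv0S hFS, ?_⟩
      rw [Finset.card_insert_of_notMem hv, hcard]
    rw [coneMap_single, (simplexSC S).bdry_gen K (k + 1) hins, Finset.sum_insert hv, hsecond]
    have hfilt0 : (insert v0 F.1).filter (fun y => y < v0) = ∅ :=
      Finset.filter_eq_empty_iff.2 (by
        intro y hy
        rcases Finset.mem_insert.1 hy with rfl | hy'
        · exact lt_irrefl _
        · exact hmin y hy')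
    have hterm0 : ((-1 : K) ^ (((insert v0 F.1).filter (fun y => y < v0)).card)) •
        (simplexSC S).gen K (k + 1) ((insert v0 F.1).erase v0) = Finsupp.single F 1 := by
      rw [hfilt0, Finset.erase_insert hv, (simplexSC S).gen_of_mem K ⟨F.2.1, hcard⟩,
        Finset.card_empty, pow_zero]
      exact one_smul K _
    rw [hterm0, add_assoc, ← Finset.sum_add_distrib]
    have hcancel : ∀ x ∈ F.1,
        ((-1 : K) ^ (((insert v0 F.1).filter (fun y => y < x)).card)) •
          (simplexSC S).gen K (k + 1) ((insert v0 F.1).erase x) +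
        ((-1 : K) ^ ((F.1.filter (fun y => y < x)).card)) •
          (simplexSC S).gen K (k + 1) (insert v0 (F.1.erase x)) = 0 := by
      intro x hx
      have hxv : v0 ≠ x := fun h => hv (h ▸ hx)
      have hv0x : v0 < x := lt_of_le_of_ne (S.min'_le x (hFS hx)) hxv
      have h4 : (insert v0 F.1).erase x = insert v0 (F.1.erase x) :=
        Finset.erase_insert_of_ne hxv
      have h5 : (insert v0 F.1).filter (fun y => y < x) =
          insert v0 (F.1.filter (fun y => y < x)) := by
        rw [Finset.filter_insert, if_pos hv0x]
      have h6 : v0 ∉ F.1.filter (fun y => y < x) := fun h => hv (Finset.mem_filter.1 h).1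
      rw [h4, h5, Finset.card_insert_of_notMem h6, pow_succ, mul_comm, neg_one_mul,
        neg_smul, neg_add_cancel]
    rw [Finset.sum_congr rfl hcancel, Finset.sum_const_zero, add_zero]

lemma cone_identity_zero (S : Finset V) (hS : S.Nonempty) :
    (simplexSC S).bdry K 0 ∘ₗ coneMap K S hS 0 = LinearMap.id := by
  classical
  refine Finsupp.lhom_ext' fun F => LinearMap.ext_ring ?_
  simp only [LinearMap.comp_apply, Finsupp.lsingle_apply, LinearMap.id_apply]
  have hF : F.1 = ∅ := Finset.card_eq_zero.1 F.2.2
  set v0 := S.min' hS with hv0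
  have hmem : insert v0 F.1 ∈ (simplexSC S).faces ∧ (insert v0 F.1).card = 0 + 1 := by
    rw [hF]
    exact ⟨Finset.singleton_subset_iff.2 (S.min'_mem hS), by simp⟩
  rw [coneMap_single, (simplexSC S).bdry_gen K 0 hmem, hF]
  rw [show insert v0 (∅ : Finset V) = {v0} from rfl]
  rw [Finset.sum_singleton, Finset.filter_singleton, if_neg (lt_irrefl v0),
    Finset.erase_singleton]
  rw [(simplexSC S).gen_of_mem K (G := (∅ : Finset V)) (k := 0)
    ⟨(simplexSC S).down F.2.1 (Finset.empty_subset _), Finset.card_empty⟩]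
  simp only [Finset.card_empty, pow_zero, one_smul]
  congr 1
  exact Subtype.ext hF.symm

lemma simplex_exact (S : Finset V) (hS : S.Nonempty) (k : ℕ) :
    LinearMap.ker ((simplexSC S).bdry K k) ≤ LinearMap.range ((simplexSC S).bdry K (k + 1)) := by
  intro c hc
  have h := congrArg (fun f => f c) (cone_identity K S hS k)
  simp only [LinearMap.add_apply, LinearMap.comp_apply, LinearMap.id_apply] at h
  rw [LinearMap.mem_ker.1 hc, map_zero, add_zero] at h
  exact ⟨coneMap K S hS (k + 1) c, h⟩

lemma simplex_bdry_zero_surjective (S : Finset V) (hS : S.Nonempty) :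
    LinearMap.range ((simplexSC S).bdry K 0) = ⊤ :=
  LinearMap.range_eq_top.2 fun c => ⟨coneMap K S hS 0 c,
    congrArg (fun f => f c) (cone_identity_zero K S hS)⟩

lemma card_face_simplex (S : Finset V) (k : ℕ) :
    Nat.card ((simplexSC S).face k) = S.card.choose k := by
  rw [← Finset.card_powersetCard k S, ← Nat.card_eq_finsetCard]
  exact Nat.card_congr (Equiv.subtypeEquivRight (fun F => by
    rw [Finset.mem_powersetCard]; exact Iff.rfl))

lemma rank_bdry_simplex [Finite V] (S : Finset V) (k : ℕ) (h : S.Nonempty ∨ 1 ≤ k) :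
    finrank K ↥(LinearMap.range ((simplexSC S).bdry K k)) = (S.card - 1).choose k := by
  rcases S.eq_empty_or_nonempty with rfl | hS
  · obtain hk := h.resolve_left (by simp)
    have h0 : finrank K ((simplexSC (∅ : Finset V)).chain K (k + 1)) = 0 := by
      rw [SC.finrank_chain, card_face_simplex]
      simp [Nat.choose_eq_zero_of_lt]
    have := LinearMap.finrank_range_le ((simplexSC (∅ : Finset V)).bdry K k)
    rw [h0, Nat.le_zero] at this
    rw [this, Finset.card_empty]
    exact (Nat.choose_eq_zero_of_lt (by omega)).symm
  · have hm : 1 ≤ S.card := Finset.card_pos.2 hS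
    induction k with
    | zero =>
      rw [simplex_bdry_zero_surjective K S hS, finrank_top, SC.finrank_chain,
        card_face_simplex]
      simp
    | succ k ih =>
      have hrange : LinearMap.range ((simplexSC S).bdry K (k + 1)) =
          LinearMap.ker ((simplexSC S).bdry K k) :=
        le_antisymm (LinearMap.range_le_ker_iff.2 ((simplexSC S).bdry_bdry K k))
          (simplex_exact K S hS k)
      have hrn := LinearMap.finrank_range_add_finrank_ker ((simplexSC S).bdry K k)
      rw [SC.finrank_chain, card_face_simplex, ih (Or.inl hS)] at hrn
      have hpascal : S.card.choose (k + 1) =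
          (S.card - 1).choose k + (S.card - 1).choose (k + 1) := by
        obtain ⟨m, hm2⟩ : ∃ m, S.card = m + 1 := ⟨S.card - 1, (Nat.succ_pred_eq_of_pos hm).symm⟩
        rw [hm2]
        simp [Nat.choose_succ_succ]
      rw [hrange]
      omega

end Dev2

section Dev3

open Finsupp LinearMap Module

variable {V : Type*} [LinearOrder V] (K : Type*) [Field K]

/-- The chain-level inclusion map of a subcomplex. -/
noncomputable def inclMap (Δ₁ Δ₂ : SC V) (h : Δ₁.faces ⊆ Δ₂.faces) (k : ℕ) :
    Δ₁.chain K k →ₗ[K] Δ₂.chain K k :=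
  Finsupp.lmapDomain K K (fun F => (⟨F.1, h F.2.1, F.2.2⟩ : Δ₂.face k))

lemma inclMap_injective (Δ₁ Δ₂ : SC V) (h : Δ₁.faces ⊆ Δ₂.faces) (k : ℕ) :
    Function.Injective (inclMap K Δ₁ Δ₂ h k) := by
  rw [inclMap]
  unfold Finsupp.lmapDomain
  refine Finsupp.mapDomain_injective fun a b hab => Subtype.ext ?_
  have : ((⟨a.1, h a.2.1, a.2.2⟩ : Δ₂.face k) : Finset V) =
      ((⟨b.1, h b.2.1, b.2.2⟩ : Δ₂.face k) : Finset V) := congrArg Subtype.val hab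
  exact this

lemma inclMap_single (Δ₁ Δ₂ : SC V) (h : Δ₁.faces ⊆ Δ₂.faces) (k : ℕ) (F : Δ₁.face k)
    (c : K) : inclMap K Δ₁ Δ₂ h k (Finsupp.single F c) =
      Finsupp.single (α := Δ₂.face k) ⟨F.1, h F.2.1, F.2.2⟩ c := by
  erw [inclMap, Finsupp.lmapDomain_apply, Finsupp.mapDomain_single]

lemma inclMap_gen (Δ₁ Δ₂ : SC V) (h : Δ₁.faces ⊆ Δ₂.faces) (k : ℕ) {G : Finset V}
    (hG : G ∈ Δ₁.faces ∧ G.card = k) :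
    inclMap K Δ₁ Δ₂ h k (Δ₁.gen K k G) = Δ₂.gen K k G := by
  erw [Δ₁.gen_of_mem K hG, inclMap_single, Δ₂.gen_of_mem K ⟨h hG.1, hG.2⟩]

lemma inclMap_comm (Δ₁ Δ₂ : SC V) (h : Δ₁.faces ⊆ Δ₂.faces) (k : ℕ) :
    Δ₂.bdry K k ∘ₗ inclMap K Δ₁ Δ₂ h (k + 1) = inclMap K Δ₁ Δ₂ h k ∘ₗ Δ₁.bdry K k := by
  refine Finsupp.lhom_ext' fun F => LinearMap.ext_ring ?_
  simp only [LinearMap.comp_apply, Finsupp.lsingle_apply]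
  erw [inclMap_single, Δ₂.bdry_single K, Δ₁.bdry_single K, map_sum]
  refine Finset.sum_congr rfl fun x hx => ?_
  rw [map_smul, inclMap_gen K Δ₁ Δ₂ h k ⟨Δ₁.down F.2.1 (Finset.erase_subset _ _), by
    simp [Finset.card_erase_of_mem hx, F.2.2]⟩]

lemma rank_comp_injective {M N P : Type*} [AddCommGroup M] [AddCommGroup N] [AddCommGroup P]
    [Module K M] [Module K N] [Module K P] [FiniteDimensional K M]
    (f : M →ₗ[K] N) (g : N →ₗ[K] P) (hg : Function.Injective g) :
    finrank K ↥(LinearMap.range (g ∘ₗ f)) = finrank K ↥(LinearMap.range f) := by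
  have h1 := LinearMap.finrank_range_add_finrank_ker (g ∘ₗ f)
  have h2 := LinearMap.finrank_range_add_finrank_ker f
  rw [LinearMap.ker_comp_of_ker_eq_bot f (LinearMap.ker_eq_bot.2 hg)] at h1
  omega

lemma rank_bdry_congr [Finite V] (Δ₁ Δ₂ : SC V) (h : Δ₁.faces ⊆ Δ₂.faces) (k : ℕ)
    (hk : ∀ F ∈ Δ₂.faces, F.card = k + 1 → F ∈ Δ₁.faces) :
    finrank K ↥(LinearMap.range (Δ₂.bdry K k)) = finrank K ↥(LinearMap.range (Δ₁.bdry K k)) := by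
  have hsurj : LinearMap.range (inclMap K Δ₁ Δ₂ h (k + 1)) = ⊤ := by
    rw [Submodule.eq_top_iff']
    intro x
    induction x using Finsupp.induction_linear with
    | zero => exact Submodule.zero_mem _
    | add f g hf hg => exact Submodule.add_mem _ hf hg
    | single F c =>
      refine ⟨Finsupp.single ⟨F.1, hk F.1 F.2.1 F.2.2, F.2.2⟩ c, ?_⟩
      erw [inclMap_single]
      exact congrArg (Finsupp.single · c) (Subtype.ext rfl)
  rw [← LinearMap.range_comp_of_range_eq_top (Δ₂.bdry K k) hsurj, inclMap_comm,
    LinearMap.range_comp]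
  rw [show Submodule.map (inclMap K Δ₁ Δ₂ h k) (LinearMap.range (Δ₁.bdry K k)) =
    LinearMap.range (inclMap K Δ₁ Δ₂ h k ∘ₗ Δ₁.bdry K k) from (LinearMap.range_comp _ _).symm]
  exact rank_comp_injective K _ _ (inclMap_injective K Δ₁ Δ₂ h k)

lemma range_inclMap_le_supported [Finite V] (Δ₁ Δ₂ : SC V) (h : Δ₁.faces ⊆ Δ₂.faces) (k : ℕ) :
    LinearMap.range (inclMap K Δ₁ Δ₂ h k) ≤
      Finsupp.supported K K {G : Δ₂.face k | G.1 ∈ Δ₁.faces} := by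
  classical
  rintro x ⟨y, rfl⟩
  rw [Finsupp.mem_supported]
  refine subset_trans (Finset.coe_subset.2 Finsupp.mapDomain_support) ?_
  intro G hG
  replace hG := Finset.mem_image.1 hG
  obtain ⟨F, _, rfl⟩ := hG
  exact F.2.1

lemma rank_bdry_split [Finite V] (Δ : SC V) (A B : Finset V) (hAB : Disjoint A B)
    (hA : A ∈ Δ.faces) (hB : B ∈ Δ.faces) (k : ℕ) (hk : 1 ≤ k)
    (hsplit : ∀ F ∈ Δ.faces, F.card = k + 1 → F ⊆ A ∨ F ⊆ B) :
    finrank K ↥(LinearMap.range (Δ.bdry K k)) =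
      finrank K ↥(LinearMap.range ((simplexSC A).bdry K k)) +
        finrank K ↥(LinearMap.range ((simplexSC B).bdry K k)) := by
  classical
  have hsubA : (simplexSC A).faces ⊆ Δ.faces := fun F hF => Δ.down hA hF
  have hsubB : (simplexSC B).faces ⊆ Δ.faces := fun F hF => Δ.down hB hF
  set ιA1 := inclMap K (simplexSC A) Δ hsubA (k + 1)
  set ιB1 := inclMap K (simplexSC B) Δ hsubB (k + 1)
  set ιA0 := inclMap K (simplexSC A) Δ hsubA k
  set ιB0 := inclMap K (simplexSC B) Δ hsubB k
  have htop : LinearMap.range ιA1 ⊔ LinearMap.range ιB1 = ⊤ := by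
    rw [Submodule.eq_top_iff']
    intro x
    induction x using Finsupp.induction_linear with
    | zero => exact Submodule.zero_mem _
    | add f g hf hg => exact Submodule.add_mem _ hf hg
    | single F c =>
      rcases hsplit F.1 F.2.1 F.2.2 with hFA | hFB
      · refine Submodule.mem_sup_left (⟨Finsupp.single ⟨F.1, hFA, F.2.2⟩ c, ?_⟩)
        rw [show ιA1 = inclMap K (simplexSC A) Δ hsubA (k+1) from rfl]
        erw [inclMap_single]
        exact congrArg (Finsupp.single · c) (Subtype.ext rfl)
      · refine Submodule.mem_sup_right (⟨Finsupp.single ⟨F.1, hFB, F.2.2⟩ c, ?_⟩)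
        rw [show ιB1 = inclMap K (simplexSC B) Δ hsubB (k+1) from rfl]
        erw [inclMap_single]
        exact congrArg (Finsupp.single · c) (Subtype.ext rfl)
  have hrange : LinearMap.range (Δ.bdry K k) =
      LinearMap.range (Δ.bdry K k ∘ₗ ιA1) ⊔ LinearMap.range (Δ.bdry K k ∘ₗ ιB1) := by
    have h1 : LinearMap.range (Δ.bdry K k) =
        Submodule.map (Δ.bdry K k) (LinearMap.range ιA1 ⊔ LinearMap.range ιB1) := by
      rw [htop, Submodule.map_top]
    rw [h1, Submodule.map_sup, ← LinearMap.range_comp, ← LinearMap.range_comp]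
  rw [hrange, inclMap_comm, inclMap_comm]
  set P := LinearMap.range (ιA0 ∘ₗ (simplexSC A).bdry K k) with hP
  set Q := LinearMap.range (ιB0 ∘ₗ (simplexSC B).bdry K k) with hQ
  have hPle : P ≤ Finsupp.supported K K {G : Δ.face k | G.1 ⊆ A} := by
    rintro x ⟨y, rfl⟩
    have := range_inclMap_le_supported K (simplexSC A) Δ hsubA k ⟨(simplexSC A).bdry K k y, rfl⟩
    exact this
  have hQle : Q ≤ Finsupp.supported K K {G : Δ.face k | G.1 ⊆ B} := by
    rintro x ⟨y, rfl⟩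
    exact range_inclMap_le_supported K (simplexSC B) Δ hsubB k ⟨(simplexSC B).bdry K k y, rfl⟩
  have hsets : Disjoint {G : Δ.face k | G.1 ⊆ A} {G : Δ.face k | G.1 ⊆ B} := by
    rw [Set.disjoint_left]
    intro G hGA hGB
    have hne : G.1.Nonempty := Finset.card_pos.1 (by rw [G.2.2]; omega)
    obtain ⟨x, hx⟩ := hne
    exact (Finset.disjoint_left.1 hAB) (hGA hx) (hGB hx)
  have hdisj : Disjoint P Q :=
    (Finsupp.disjoint_supported_supported hsets).mono hPle hQle
  have hsum := Submodule.finrank_sup_add_finrank_inf_eq P Q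
  rw [hdisj.eq_bot, finrank_bot] at hsum
  have hPrank : finrank K ↥P = finrank K ↥(LinearMap.range ((simplexSC A).bdry K k)) :=
    rank_comp_injective K _ _ (inclMap_injective K (simplexSC A) Δ hsubA k)
  have hQrank : finrank K ↥Q = finrank K ↥(LinearMap.range ((simplexSC B).bdry K k)) :=
    rank_comp_injective K _ _ (inclMap_injective K (simplexSC B) Δ hsubB k)
  omega

end Dev3

section Dev4

open Finsupp LinearMap Module

variable (K : Type*) [Field K]

lemma pascal' (a k : ℕ) (hk : 1 ≤ k) :
    a.choose (k + 1) = (a - 1).choose k + (a - 1).choose (k + 1) := by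
  cases a with
  | zero =>
    simp [Nat.choose_eq_zero_of_lt (show 0 < k by omega),
      Nat.choose_eq_zero_of_lt (show 0 < k + 1 by omega)]
  | succ a => simp [Nat.choose_succ_succ]

namespace BipProof

variable (n1 n2 r : ℕ) (W : Finset (Fin n1 ⊕ Fin n2))

/-- Left part of `W`. -/
noncomputable def lp : Finset (Fin n1 ⊕ Fin n2) := W.filter (fun x => x.isLeft)

/-- Right part of `W`. -/
noncomputable def rp : Finset (Fin n1 ⊕ Fin n2) := W.filter (fun x => x.isRight)

lemma lp_card : (lp n1 n2 W).card = W.toLeft.card := by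
  have : lp n1 n2 W = W.toLeft.map ⟨Sum.inl, Sum.inl_injective⟩ := by
    ext x
    cases x with
    | inl a => simp [lp, Finset.mem_toLeft]
    | inr b => simp [lp]
  rw [this, Finset.card_map]

lemma rp_card : (rp n1 n2 W).card = W.toRight.card := by
  have : rp n1 n2 W = W.toRight.map ⟨Sum.inr, Sum.inr_injective⟩ := by
    ext x
    cases x with
    | inl a => simp [rp]
    | inr b => simp [rp, Finset.mem_toRight]
  rw [this, Finset.card_map]

lemma lp_rp_card : (lp n1 n2 W).card + (rp n1 n2 W).card = W.card := by
  rw [lp_card, rp_card, Finset.card_toLeft_add_card_toRight]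

lemma lp_mem : lp n1 n2 W ∈ ((bipSC n1 n2 r).induce W).faces :=
  ⟨Or.inr (Or.inl fun x hx => (Finset.mem_filter.1 hx).2), Finset.filter_subset _ _⟩

lemma rp_mem : rp n1 n2 W ∈ ((bipSC n1 n2 r).induce W).faces :=
  ⟨Or.inr (Or.inr fun x hx => (Finset.mem_filter.1 hx).2), Finset.filter_subset _ _⟩

lemma lp_rp_disjoint : Disjoint (lp n1 n2 W) (rp n1 n2 W) := by
  rw [Finset.disjoint_left]
  intro x hx hx'
  have h1 := (Finset.mem_filter.1 hx).2
  have h2 := (Finset.mem_filter.1 hx').2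
  cases x <;> simp_all

lemma hsplit (k : ℕ) (hk : r ≤ k) :
    ∀ F ∈ ((bipSC n1 n2 r).induce W).faces, F.card = k + 1 →
      F ⊆ lp n1 n2 W ∨ F ⊆ rp n1 n2 W := by
  rintro F ⟨hface, hFW⟩ hcard
  rcases hface with h | h | h
  · omega
  · exact Or.inl fun x hx => Finset.mem_filter.2 ⟨hFW hx, h x hx⟩
  · exact Or.inr fun x hx => Finset.mem_filter.2 ⟨hFW hx, h x hx⟩

lemma rank_W_low (hW : W.Nonempty) (k : ℕ) (hk : k + 1 ≤ r) :
    finrank K ↥(LinearMap.range (((bipSC n1 n2 r).induce W).bdry K k)) =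
      (W.card - 1).choose k := by
  have h := rank_bdry_congr K ((bipSC n1 n2 r).induce W) (simplexSC W)
    (fun F hF => hF.2) k
    (fun F hF hcard => ⟨Or.inl (by omega), hF⟩)
  rw [← h, rank_bdry_simplex K W k (Or.inl hW)]

lemma rank_W_high (hr : 1 ≤ r) (k : ℕ) (hk : r ≤ k) :
    finrank K ↥(LinearMap.range (((bipSC n1 n2 r).induce W).bdry K k)) =
      ((lp n1 n2 W).card - 1).choose k + ((rp n1 n2 W).card - 1).choose k := by
  rw [rank_bdry_split K ((bipSC n1 n2 r).induce W) (lp n1 n2 W) (rp n1 n2 W)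
      (lp_rp_disjoint n1 n2 W) (lp_mem n1 n2 r W) (rp_mem n1 n2 r W) k (le_trans hr hk)
      (hsplit n1 n2 r W k hk),
    rank_bdry_simplex K _ k (Or.inr (le_trans hr hk)),
    rank_bdry_simplex K _ k (Or.inr (le_trans hr hk))]

lemma card_face_W_low (k : ℕ) (hk : k ≤ r) :
    Nat.card (((bipSC n1 n2 r).induce W).face k) = W.card.choose k := by
  rw [← Finset.card_powersetCard k W, ← Nat.card_eq_finsetCard]
  refine Nat.card_congr (Equiv.subtypeEquivRight fun F => ?_)
  rw [Finset.mem_powersetCard]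
  constructor
  · rintro ⟨⟨_, hFW⟩, hcard⟩
    exact ⟨hFW, hcard⟩
  · rintro ⟨hFW, hcard⟩
    exact ⟨⟨Or.inl (by omega), hFW⟩, hcard⟩

lemma card_face_W_high (k : ℕ) (hk : r < k) :
    Nat.card (((bipSC n1 n2 r).induce W).face k) =
      (lp n1 n2 W).card.choose k + (rp n1 n2 W).card.choose k := by
  classical
  have hdisj : Disjoint ((lp n1 n2 W).powersetCard k) ((rp n1 n2 W).powersetCard k) := by
    rw [Finset.disjoint_left]
    intro F hF hF'
    have h1 := Finset.mem_powersetCard.1 hF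
    have h2 := Finset.mem_powersetCard.1 hF'
    have : F ⊆ lp n1 n2 W ⊓ rp n1 n2 W := Finset.subset_inter h1.1 h2.1
    rw [(lp_rp_disjoint n1 n2 W).eq_bot] at this
    have : F = ∅ := Finset.subset_empty.1 this
    rw [this] at h1
    simp at h1
    omega
  rw [← Finset.card_powersetCard k (lp n1 n2 W), ← Finset.card_powersetCard k (rp n1 n2 W),
    ← Finset.card_union_of_disjoint hdisj, ← Nat.card_eq_finsetCard]
  refine Nat.card_congr (Equiv.subtypeEquivRight fun F => ?_)
  rw [Finset.mem_union, Finset.mem_powersetCard, Finset.mem_powersetCard]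
  constructor
  · rintro ⟨⟨hface, hFW⟩, hcard⟩
    rcases hface with h | h | h
    · omega
    · exact Or.inl ⟨fun x hx => Finset.mem_filter.2 ⟨hFW hx, h x hx⟩, hcard⟩
    · exact Or.inr ⟨fun x hx => Finset.mem_filter.2 ⟨hFW hx, h x hx⟩, hcard⟩
  · rintro (⟨hFA, hcard⟩ | ⟨hFB, hcard⟩)
    · exact ⟨⟨Or.inr (Or.inl fun x hx => (Finset.mem_filter.1 (hFA hx)).2),
        hFA.trans (Finset.filter_subset _ _)⟩, hcard⟩
    · exact ⟨⟨Or.inr (Or.inr fun x hx => (Finset.mem_filter.1 (hFB hx)).2),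
        hFB.trans (Finset.filter_subset _ _)⟩, hcard⟩

lemma hdim_W (hr : 1 ≤ r) (hW : W.Nonempty) (k : ℕ) :
    ((bipSC n1 n2 r).induce W).hdim K k =
      if k = r then
        (W.card - 1).choose r - ((W.toLeft.card - 1).choose r + (W.toRight.card - 1).choose r)
      else 0 := by
  have hm : 1 ≤ W.card := Finset.card_pos.2 hW
  have hab := lp_rp_card n1 n2 W
  rw [← lp_card, ← rp_card]
  rw [SC.hdim]
  cases k with
  | zero =>
    rw [if_neg (by omega)]
    rw [show ((bipSC n1 n2 r).induce W).bdryTo K 0 = 0 from rfl, LinearMap.ker_zero,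
      finrank_top, SC.finrank_chain, card_face_W_low n1 n2 r W 0 (by omega),
      rank_W_low K n1 n2 r W hW 0 (by omega)]
    simp
  | succ k =>
    rw [show ((bipSC n1 n2 r).induce W).bdryTo K (k + 1) = ((bipSC n1 n2 r).induce W).bdry K k
      from rfl]
    have hrn := LinearMap.finrank_range_add_finrank_ker (((bipSC n1 n2 r).induce W).bdry K k)
    rw [SC.finrank_chain] at hrn
    rcases lt_trichotomy (k + 1) r with hlt | heq | hgt
    · -- k + 1 < r
      rw [card_face_W_low n1 n2 r W (k+1) (by omega),
        rank_W_low K n1 n2 r W hW k (by omega)] at hrn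
      have hp : W.card.choose (k + 1) = (W.card - 1).choose k + (W.card - 1).choose (k + 1) := by
        obtain ⟨m, hm2⟩ : ∃ m, W.card = m + 1 := ⟨W.card - 1, (Nat.succ_pred_eq_of_pos hm).symm⟩
        rw [hm2]; simp [Nat.choose_succ_succ]
      rw [rank_W_low K n1 n2 r W hW (k+1) (by omega), if_neg (by omega)]
      omega
    · -- k + 1 = r
      subst heq
      rw [card_face_W_low n1 n2 (k+1) W (k+1) (by omega),
        rank_W_low K n1 n2 (k+1) W hW k (by omega)] at hrn
      have hp : W.card.choose (k + 1) = (W.card - 1).choose k + (W.card - 1).choose (k + 1) := by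
        obtain ⟨m, hm2⟩ : ∃ m, W.card = m + 1 := ⟨W.card - 1, (Nat.succ_pred_eq_of_pos hm).symm⟩
        rw [hm2]; simp [Nat.choose_succ_succ]
      rw [rank_W_high K n1 n2 (k+1) W hr (k+1) (by omega), if_pos rfl]
      omega
    · -- r < k + 1, i.e. r ≤ k
      have hrk : r ≤ k := by omega
      rw [card_face_W_high n1 n2 r W (k+1) (by omega),
        rank_W_high K n1 n2 r W hr k hrk] at hrn
      have hpa := pascal' (lp n1 n2 W).card k (by omega)
      have hpb := pascal' (rp n1 n2 W).card k (by omega)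
      rw [rank_W_high K n1 n2 r W hr (k+1) (by omega), if_neg (by omega)]
      omega

end BipProof

end Dev4

section Dev5

open Finsupp Module

lemma choose_add_choose_le (a b r : ℕ) (hr : 1 ≤ r) :
    a.choose r + b.choose r ≤ (a + b).choose r := by
  rw [Nat.add_choose_eq]
  have hne : ((r, 0) : ℕ × ℕ) ≠ (0, r) := by
    intro h
    have := congrArg Prod.fst h
    simp at this
    omega
  calc a.choose r + b.choose r
      = ∑ p ∈ ({(r, 0), (0, r)} : Finset (ℕ × ℕ)), a.choose p.1 * b.choose p.2 := by
        rw [Finset.sum_pair hne]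
        simp
    _ ≤ ∑ p ∈ Finset.HasAntidiagonal.antidiagonal r, a.choose p.1 * b.choose p.2 := by
        refine Finset.sum_le_sum_of_subset ?_
        intro p hp
        simp only [Finset.mem_insert, Finset.mem_singleton] at hp
        rcases hp with rfl | rfl <;> simp [Finset.HasAntidiagonal.mem_antidiagonal]

lemma ybound (p1 p2 j r : ℕ) (hr : 1 ≤ r) (hp : p1 + p2 = j) :
    (p1 - 1).choose r + (p2 - 1).choose r ≤ (j - 1).choose r := by
  rcases Nat.eq_zero_or_pos p1 with rfl | h1
  · simp only [Nat.zero_sub, Nat.choose_eq_zero_of_lt (show 0 < r by omega), zero_add]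
    exact Nat.choose_le_choose r (by omega)
  rcases Nat.eq_zero_or_pos p2 with rfl | h2
  · simp only [Nat.zero_sub, Nat.choose_eq_zero_of_lt (show 0 < r by omega), add_zero]
    exact Nat.choose_le_choose r (by omega)
  calc (p1 - 1).choose r + (p2 - 1).choose r
      ≤ ((p1 - 1) + (p2 - 1)).choose r := choose_add_choose_le _ _ r hr
    _ ≤ (j - 1).choose r := Nat.choose_le_choose r (by omega)

lemma sum_powersetCard_sum (n1 n2 j : ℕ) (g : ℕ → ℕ → ℕ) :
    ∑ W ∈ (Finset.univ : Finset (Fin n1 ⊕ Fin n2)).powersetCard j,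
        g W.toLeft.card W.toRight.card =
      ∑ p ∈ Finset.HasAntidiagonal.antidiagonal j, n1.choose p.1 * n2.choose p.2 * g p.1 p.2 := by
  classical
  have step1 : ∑ W ∈ (Finset.univ : Finset (Fin n1 ⊕ Fin n2)).powersetCard j,
      g W.toLeft.card W.toRight.card =
      ∑ AB ∈ (Finset.univ : Finset (Finset (Fin n1) × Finset (Fin n2))).filter
          (fun AB => AB.1.card + AB.2.card = j), g AB.1.card AB.2.card := by
    refine Finset.sum_bij' (fun W _ => (W.toLeft, W.toRight))
      (fun AB _ => AB.1.disjSum AB.2) ?_ ?_ ?_ ?_ ?_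
    · intro W hW
      rw [Finset.mem_filter]
      refine ⟨Finset.mem_univ _, ?_⟩
      rw [Finset.card_toLeft_add_card_toRight]
      exact (Finset.mem_powersetCard.1 hW).2
    · intro AB hAB
      rw [Finset.mem_filter] at hAB
      rw [Finset.mem_powersetCard]
      exact ⟨Finset.subset_univ _, by rw [Finset.card_disjSum]; exact hAB.2⟩
    · intro W _
      exact Finset.toLeft_disjSum_toRight
    · intro AB _
      simp
    · intro W _
      rfl
  rw [step1]
  rw [← Finset.sum_fiberwise_of_maps_to (t := Finset.HasAntidiagonal.antidiagonal j)
    (g := fun AB : Finset (Fin n1) × Finset (Fin n2) => (AB.1.card, AB.2.card))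
    (fun AB hAB => Finset.HasAntidiagonal.mem_antidiagonal.2 (Finset.mem_filter.1 hAB).2)
    (fun AB => g AB.1.card AB.2.card)]
  refine Finset.sum_congr rfl fun p hp => ?_
  have hpj : p.1 + p.2 = j := Finset.HasAntidiagonal.mem_antidiagonal.1 hp
  have hfib : ((Finset.univ : Finset (Finset (Fin n1) × Finset (Fin n2))).filter
      (fun AB => AB.1.card + AB.2.card = j)).filter
        (fun AB => (AB.1.card, AB.2.card) = p) =
      (Finset.univ.powersetCard p.1) ×ˢ (Finset.univ.powersetCard p.2) := by
    ext AB
    simp only [Finset.mem_filter, Finset.mem_univ, true_and, Finset.mem_product,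
      Finset.mem_powersetCard_univ]
    constructor
    · rintro ⟨hsum, heq⟩
      exact ⟨congrArg Prod.fst heq, congrArg Prod.snd heq⟩
    · rintro ⟨hc1, hc2⟩
      exact ⟨by omega, Prod.ext hc1 hc2⟩
  rw [hfib]
  rw [Finset.sum_congr rfl (fun AB hAB => ?_)]
  case _ =>
    rw [Finset.sum_const, Finset.card_product, Finset.card_powersetCard,
      Finset.card_powersetCard, Finset.card_univ, Finset.card_univ, Fintype.card_fin,
      Fintype.card_fin, smul_eq_mul]
  case _ =>
    rw [Finset.mem_product, Finset.mem_powersetCard_univ, Finset.mem_powersetCard_univ] at hAB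
    rw [hAB.1, hAB.2]

end Dev5

/-- Graded Betti numbers of `R/I_r(K_{n1,n2})`:
`β_{i,i+r} = C(n1+n2, i+r)·C(i+r-1, r) − ∑_{j1+j2 = i+r} C(n1,j1) C(n2,j2)
[C(j1-1, r) + C(j2-1, r)]`, and `β_{i,i+d} = 0` for `d ≠ r` with `(i,d) ≠ (0,0)`. -/
theorem betti_bipartite (K : Type*) [Field K] (n1 n2 r : ℕ) (h1 : 1 ≤ n1) (h2 : 1 ≤ n2)
    (hr : 1 ≤ r) :
    (∀ i : ℕ,
      (bipSC n1 n2 r).betti K i (i + r) =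
        (n1 + n2).choose (i + r) * (i + r - 1).choose r -
          ∑ p ∈ Finset.HasAntidiagonal.antidiagonal (i + r),
            n1.choose p.1 * n2.choose p.2 *
              ((p.1 - 1).choose r + (p.2 - 1).choose r)) ∧
    (∀ i d : ℕ, d ≠ r → (i, d) ≠ (0, 0) →
      (bipSC n1 n2 r).betti K i (i + d) = 0) := by
  constructor
  · intro i
    rw [SC.betti]
    have h1' : ∀ W ∈ (Finset.univ : Finset (Fin n1 ⊕ Fin n2)).powersetCard (i + r),
        ((bipSC n1 n2 r).induce W).hdim K (i + r - i) =
          (fun a b => (i + r - 1).choose r - ((a - 1).choose r + (b - 1).choose r))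
            W.toLeft.card W.toRight.card := by
      intro W hW
      have hcard : W.card = i + r := Finset.mem_powersetCard_univ.1 hW
      have hW' : W.Nonempty := Finset.card_pos.1 (by omega)
      rw [show i + r - i = r from by omega, BipProof.hdim_W K n1 n2 r W hr hW', if_pos rfl,
        hcard]
    rw [Finset.sum_congr rfl h1']
    rw [sum_powersetCard_sum n1 n2 (i + r)
      (fun a b => (i + r - 1).choose r - ((a - 1).choose r + (b - 1).choose r))]
    have hsplit : ∀ p ∈ Finset.HasAntidiagonal.antidiagonal (i + r),
        n1.choose p.1 * n2.choose p.2 *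
            ((i + r - 1).choose r - ((p.1 - 1).choose r + (p.2 - 1).choose r)) =
          n1.choose p.1 * n2.choose p.2 * (i + r - 1).choose r -
            n1.choose p.1 * n2.choose p.2 * ((p.1 - 1).choose r + (p.2 - 1).choose r) :=
      fun p _ => Nat.mul_sub _ _ _
    rw [Finset.sum_congr rfl hsplit]
    rw [Finset.sum_tsub_distrib _ (fun p hp => Nat.mul_le_mul_left _
      (ybound p.1 p.2 (i + r) r hr (Finset.HasAntidiagonal.mem_antidiagonal.1 hp)))]
    congr 1
    rw [← Finset.sum_mul, ← Nat.add_choose_eq]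
  · intro i d hd hne
    rw [SC.betti]
    refine Finset.sum_eq_zero fun W hW => ?_
    have hcard : W.card = i + d := Finset.mem_powersetCard_univ.1 hW
    have hid : i + d ≠ 0 := by
      intro h
      exact hne (by
        have hi : i = 0 := by omega
        have hd0 : d = 0 := by omega
        rw [hi, hd0])
    have hW' : W.Nonempty := Finset.card_pos.1 (by omega)
    rw [show i + d - i = d from by omega, BipProof.hdim_W K n1 n2 r W hr hW', if_neg hd]
end
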